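/- arXiv:1602.07167 — 10 statements merged into one kernel-verified Lean document; each statement's English description precedes it below -/
import Mathlib

section
/- Let M be a matroid and F a flat of M. Define cyc_M(F) as the union of all circuits of M contained in F. Then cyc_M(F) is a flat of M. -/
open Matroid Set
open scoped Classical

variable {α : Type*}

/-- A circuit of a matroid: a minimal dependent set. -/
def Matroid.Circuit' (M : Matroid α) (C : Set α) : Prop :=
  M.Dep C ∧ ∀ D, D ⊂ C → M.Indep D

/-- The cyclic part `cyc_M(F)` of a set `F`: the union of all circuits of `M` contained
in `F`. -/
def Matroid.cyc (M : Matroid α) (F : Set α) : Set α :=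
  ⋃₀ {C | M.Circuit' C ∧ C ⊆ F}

/-- The (extended) rank of a set in a matroid: the supremum of the cardinalities of the
independent subsets. -/
noncomputable def Matroid.eRk' (M : Matroid α) (X : Set α) : ℕ∞ :=
  ⨆ I ∈ {I | M.Indep I ∧ I ⊆ X}, I.encard

/-- The rank of a matroid. -/
noncomputable def Matroid.rk' (M : Matroid α) : ℕ∞ := M.eRk' M.E

/-- A matroid is loopfree if every element of the ground set is independent. -/
def Matroid.Loopless' (M : Matroid α) : Prop := ∀ e ∈ M.E, M.Indep {e}

/-- `U` is the matroid union `M ∨ N`: its independent sets are exactly the unions of an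
independent set of `M` and an independent set of `N`. -/
def IsMatroidUnion (M N U : Matroid α) : Prop :=
  U.E = M.E ∧ ∀ X, U.Indep X ↔ ∃ I J, M.Indep I ∧ N.Indep J ∧ X = I ∪ J

/-- `P` is the matroid intersection `M ∧ N := (M* ∨ N*)*`. -/
def IsMatroidInter (M N P : Matroid α) : Prop :=
  ∃ U, IsMatroidUnion M✶ N✶ U ∧ P = U✶

/-- Contraction of a set in a matroid, defined by duality: `M/A = (M* \ A)*`. -/
def Matroid.contract' (M : Matroid α) (A : Set α) : Matroid α := (M✶ ↾ (M.E \ A))✶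

/-- A cyclic flat: a flat which is the union of the circuits contained in it. -/
def Matroid.CyclicFlat (M : Matroid α) (F : Set α) : Prop :=
  M.IsFlat F ∧ F = M.cyc F

/-- A nested matroid: one whose cyclic flats form a chain under inclusion. -/
def Matroid.Nested (M : Matroid α) : Prop := IsChain (· ⊆ ·) {F | M.CyclicFlat F}

/-- Every dependent set in a finite matroid contains a circuit. -/
lemma exists_circuit'_subset (M : Matroid α) [M.Finite] {D : Set α} (hD : M.Dep D) :
    ∃ C ⊆ D, M.Circuit' C := by
  have hfin : D.Finite := M.ground_finite.subset hD.subset_ground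
  obtain ⟨C, hCmem, hCmin⟩ := Set.Finite.exists_minimalFor id {D' | D' ⊆ D ∧ M.Dep D'}
    (Set.Finite.subset hfin.finite_subsets (fun X hX ↦ hX.1))
    ⟨D, Subset.rfl, hD⟩
  refine ⟨C, hCmem.1, hCmem.2, fun D' hD' ↦ ?_⟩
  by_contra hind
  have hDep : M.Dep D' := ⟨hind, hD'.subset.trans hCmem.2.subset_ground⟩
  exact hD'.ne (subset_antisymm hD'.subset (hCmin ⟨hD'.subset.trans hCmem.1, hDep⟩ hD'.subset))

lemma exists_circuit'_of_mem_closure (M : Matroid α) [M.Finite] {X : Set α} {e : α}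
    (hX : X ⊆ M.E) (he : e ∈ M.closure X) (heX : e ∉ X) :
    ∃ C, M.Circuit' C ∧ e ∈ C ∧ C ⊆ insert e X := by
  obtain ⟨I, hI⟩ := M.exists_isBasis X
  have heI : e ∉ I := fun h ↦ heX (hI.subset h)
  have hdep : M.Dep (insert e I) := by
    rw [hI.indep.insert_dep_iff, hI.closure_eq_closure]
    exact ⟨he, heI⟩
  obtain ⟨C, hCss, hC⟩ := exists_circuit'_subset M hdep
  refine ⟨C, hC, ?_, hCss.trans (insert_subset_insert hI.subset)⟩
  by_contra heC
  have : C ⊆ I := fun x hx ↦ (hCss hx).resolve_left (fun h ↦ heC (h ▸ hx))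
  exact hC.1.not_indep (hI.indep.subset this)

lemma closure_flat' (M : Matroid α) (X : Set α) : M.IsFlat (M.closure X) := by
  have hne : Nonempty {F // M.IsFlat F ∧ X ∩ M.E ⊆ F} :=
    ⟨⟨M.E, M.ground_isFlat, inter_subset_right⟩⟩
  have : M.closure X = ⋂ F : {F // M.IsFlat F ∧ X ∩ M.E ⊆ F}, F.1 := by
    rw [closure_def]
    ext x
    simp
  rw [this]
  exact IsFlat.iInter fun F ↦ F.2.1

/-- For a flat `F` of a finite matroid `M`, the union `cyc_M(F)` of all circuits of `M`
contained in `F` is again a flat of `M`. -/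
theorem cyc_flat (M : Matroid α) [M.Finite] (F : Set α) (hF : M.IsFlat F) :
    M.IsFlat (M.cyc F) := by
  have hcycF : M.cyc F ⊆ F := by
    rintro x ⟨C, ⟨hC, hCF⟩, hxC⟩
    exact hCF hxC
  have hsubE : M.cyc F ⊆ M.E := hcycF.trans hF.subset_ground
  suffices h : M.closure (M.cyc F) = M.cyc F by
    rw [← h]; exact closure_flat' M _
  refine subset_antisymm (fun e he ↦ ?_) (M.subset_closure _ hsubE)
  by_contra heC
  obtain ⟨C, hC, heCmem, hCss⟩ := exists_circuit'_of_mem_closure M hsubE he heC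
  have heF : e ∈ F := by
    have := M.closure_subset_closure hcycF (X := M.cyc F) (Y := F)
    rw [hF.closure] at this
    exact this he
  exact heC ⟨C, ⟨hC, hCss.trans (insert_subset heF hcycF)⟩, heCmem⟩
end

section
/- Let M be a matroid, F a flat of M, and let Z = cyc_M(F) be the union of all circuits of M contained in F. Then every set A with Z ⊆ A ⊆ F is a flat of M. -/
open Matroid Set
open scoped Classical

variable {α : Type*}

private lemma aux_exists_circuit_subset (M : Matroid α) [M.Finite] :
    ∀ n (X : Set α), X.ncard ≤ n → M.Dep X →
      ∃ C ⊆ X, M.Dep C ∧ ∀ D, D ⊂ C → M.Indep D := by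
  intro n
  induction n with
  | zero =>
    intro X hn hX
    refine ⟨X, Subset.rfl, hX, fun D hD => absurd hD (fun hD => ?_)⟩
    have hfin : X.Finite := M.ground_finite.subset hX.subset_ground
    have : X = ∅ := by
      rw [← Set.ncard_eq_zero hfin]; omega
    rw [this] at hD; exact absurd (Set.empty_subset D) hD.2
  | succ n ih =>
    intro X hn hX
    by_cases h : ∀ D, D ⊂ X → M.Indep D
    · exact ⟨X, Subset.rfl, hX, h⟩
    · push_neg at h
      obtain ⟨D, hDX, hD⟩ := h
      have hDE : D ⊆ M.E := hDX.subset.trans hX.subset_ground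
      have hDdep : M.Dep D := ⟨hD, hDE⟩
      have hfin : X.Finite := M.ground_finite.subset hX.subset_ground
      have hlt : D.ncard < X.ncard := Set.ncard_lt_ncard hDX hfin
      obtain ⟨C, hCD, hC⟩ := ih D (by omega) hDdep
      exact ⟨C, hCD.trans hDX.subset, hC⟩

/-- If `F` is a flat of a finite matroid `M` and `Z = cyc_M(F)` is the union of all
circuits contained in `F`, then every set `A` with `Z ⊆ A ⊆ F` is a flat of `M`. -/
theorem flat_of_between_cyc (M : Matroid α) [M.Finite] (F A : Set α) (hF : M.IsFlat F)
    (hZA : M.cyc F ⊆ A) (hAF : A ⊆ F) : M.IsFlat A := by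
  have hAE : A ⊆ M.E := hAF.trans hF.subset_ground
  have hclA : M.closure A ⊆ A := by
    intro e he
    by_contra heA
    have heF : e ∈ F := by
      rw [← hF.closure]
      exact M.closure_subset_closure hAF he
    obtain ⟨I, hI⟩ := M.exists_isBasis A hAE
    have heI : e ∉ I := fun h => heA (hI.subset h)
    have hecl : e ∈ M.closure I := by rwa [hI.closure_eq_closure]
    have hdep : M.Dep (insert e I) := by
      rcases hI.indep.mem_closure_iff.mp hecl with h | h
      · exact h
      · exact absurd h heI
    obtain ⟨C, hCsub, hCdep, hCmin⟩ :=
      aux_exists_circuit_subset M (insert e I).ncard (insert e I) le_rfl hdep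
    have heC : e ∈ C := by
      by_contra heC
      have : C ⊆ I := fun x hx => ((hCsub hx).resolve_left (fun h => heC (h ▸ hx)))
      exact hCdep.not_indep (hI.indep.subset this)
    have hCF : C ⊆ F := hCsub.trans (insert_subset heF (hI.subset.trans hAF))
    have : e ∈ M.cyc F := ⟨C, ⟨⟨hCdep, hCmin⟩, hCF⟩, heC⟩
    exact heA (hZA this)
  refine ⟨fun I X hIA hIX => ?_, hAE⟩
  have : X ⊆ M.closure I := hIX.subset_closure
  rw [hIA.closure_eq_closure] at this
  exact fun x hx => hclA (this hx)
end

section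
/- Let X and Y be distinct cyclic flats of a matroid M with X ⊊ Y, where a cyclic flat is a flat equal to the union of the circuits it contains. Then 0 < r(Y) − r(X) < |Y \ X|, where r is the rank function of M. -/
open Matroid Set
open scoped Classical

variable {α : Type*}

lemma aux_eRk'_eq_encard {M : Matroid α} {I X : Set α} (hI : M.IsBasis I X) :
    M.eRk' X = I.encard := by
  apply le_antisymm
  · refine iSup₂_le fun J hJ => ?_
    obtain ⟨B, hB, hJB⟩ := (restrict_indep_iff.mpr ⟨hJ.1, hJ.2⟩ :
      (M ↾ X).Indep J).exists_isBase_superset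
    calc J.encard ≤ B.encard := encard_le_encard hJB
    _ = I.encard := hB.encard_eq_encard_of_isBase hI.isBase_restrict
  · exact le_iSup₂ (f := fun (I : Set α) (_ : I ∈ {I | M.Indep I ∧ I ⊆ X}) => I.encard)
      I ⟨hI.indep, hI.subset⟩

theorem cyclicFlat_rank_gap' (M : Matroid α) [M.Finite] (X Y : Set α)
    (hX : M.CyclicFlat X) (hY : M.CyclicFlat Y) (hXY : X ⊂ Y) :
    M.eRk' X < M.eRk' Y ∧ M.eRk' Y < M.eRk' X + (Y \ X).encard := by
  have hXE : X ⊆ M.E := hX.1.subset_ground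
  have hYE : Y ⊆ M.E := hY.1.subset_ground
  obtain ⟨I, hI⟩ := M.exists_isBasis X hXE
  obtain ⟨J, hJ, hIJ⟩ := hI.indep.subset_isBasis_of_subset (hI.subset.trans hXY.subset) hYE
  have hIfin : I.Finite := M.ground_finite.subset (hI.subset.trans hXE)
  have hJfin : J.Finite := M.ground_finite.subset (hJ.subset.trans hYE)
  have hclI : M.closure I = X := by rw [hI.closure_eq_closure, hX.1.closure]
  -- an element of Y \ X
  obtain ⟨e, heY, heX⟩ := exists_of_ssubset hXY
  have hrX : M.eRk' X = I.encard := aux_eRk'_eq_encard hI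
  have hrY : M.eRk' Y = J.encard := aux_eRk'_eq_encard hJ
  constructor
  · -- strict rank increase
    have heI : e ∉ M.closure I := by rwa [hclI]
    have hins : M.Indep (insert e I) :=
      ((hI.indep.insert_indep_iff_of_notMem (fun h => heX (hI.subset h))).mpr
        ⟨hYE heY, heI⟩)
    have hle : (insert e I).encard ≤ M.eRk' Y :=
      le_iSup₂ (f := fun (I : Set α) (_ : I ∈ {I | M.Indep I ∧ I ⊆ Y}) => I.encard)
        (insert e I) ⟨hins, insert_subset heY (hI.subset.trans hXY.subset)⟩
    rw [encard_insert_of_notMem (fun h => heX (hI.subset h))] at hle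
    rw [hrX]
    exact lt_of_lt_of_le ((ENat.lt_add_one_iff hIfin.encard_lt_top.ne).mpr le_rfl) hle
  · -- upper bound
    -- J \ I ⊆ Y \ X
    have hJI_sub : J \ I ⊆ Y \ X := by
      rintro x ⟨hxJ, hxI⟩
      refine ⟨hJ.subset hxJ, fun hxX => ?_⟩
      have : M.Indep (insert x I) := hJ.indep.subset (insert_subset hxJ hIJ)
      have hx : x ∈ M.closure I := hclI ▸ hxX
      exact ((hI.indep.insert_indep_iff_of_notMem hxI).mp this).2 hx
    -- get a circuit through e inside Y
    have heCyc : e ∈ M.cyc Y := by rw [← hY.2]; exact heY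
    obtain ⟨C, ⟨hC, hCY⟩, heC⟩ := heCyc
    -- e ∈ closure (C \ {e})
    have hCe_indep : M.Indep (C \ {e}) :=
      hC.2 _ (sdiff_singleton_ssubset.mpr heC)
    have heclC : e ∈ M.closure (C \ {e}) := by
      have : M.Dep (insert e (C \ {e})) := by
        rw [insert_diff_singleton, insert_eq_of_mem heC]; exact hC.1
      exact (hCe_indep.insert_dep_iff.mp this).1
    have hne : ¬ (Y \ X ⊆ J) := by
      intro hsub
      have heJ : e ∈ J := hsub ⟨heY, heX⟩
      -- C \ {e} ⊆ closure (J \ {e})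
      have hsub2 : C \ {e} ⊆ M.closure (J \ {e}) := by
        intro x ⟨hxC, hxe⟩
        by_cases hxX : x ∈ X
        · have : x ∈ M.closure I := hclI ▸ hxX
          refine M.closure_subset_closure ?_ this
          refine subset_diff_singleton hIJ (fun h => heX (hI.subset h))
        · have hxJ : x ∈ J := hsub ⟨hCY hxC, hxX⟩
          exact M.subset_closure (J \ {e}) (diff_subset.trans hJ.indep.subset_ground)
            ⟨hxJ, hxe⟩
      have : e ∈ M.closure (J \ {e}) :=
        M.closure_subset_closure_of_subset_closure hsub2 heclC
      exact hJ.indep.notMem_closure_diff_of_mem heJ this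
    have hss : J \ I ⊂ Y \ X := by
      refine ssubset_of_subset_of_ne hJI_sub (fun h => hne ?_)
      rw [← h]; exact diff_subset
    have hYXfin : (Y \ X).Finite := M.ground_finite.subset (diff_subset.trans hYE)
    have hlt : (J \ I).encard < (Y \ X).encard := (hYXfin.subset hss.subset).encard_lt_encard hss
    rw [hrY, hrX, ← encard_diff_add_encard_of_subset hIJ, add_comm]
    exact WithTop.add_lt_add_left hIfin.encard_lt_top.ne hlt

/-- If `X ⊊ Y` are cyclic flats of a finite matroid `M`, then
`0 < r(Y) - r(X) < |Y \ X|`. -/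
theorem cyclicFlat_rank_gap (M : Matroid α) [M.Finite] (X Y : Set α)
    (hX : M.CyclicFlat X) (hY : M.CyclicFlat Y) (hXY : X ⊂ Y) :
    M.eRk' X < M.eRk' Y ∧ M.eRk' Y < M.eRk' X + (Y \ X).encard :=
  cyclicFlat_rank_gap' M X Y hX hY hXY
end

section
/- Let M and N be matroids on the same finite ground set E. The spanning sets of the matroid intersection M ∧ N := (M* ∨ N*)* are exactly the sets of the form S ∩ T where S is spanning in M and T is spanning in N. -/
open Matroid Set
open scoped Classical

variable {α : Type*}

/-- The spanning sets of the matroid intersection `M ∧ N := (M* ∨ N*)*` of two matroids on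
the same finite ground set are exactly the sets `S ∩ T` with `S` spanning in `M` and `T`
spanning in `N`. -/
theorem spanning_matroidInter (M N P : Matroid α) [M.Finite] [N.Finite]
    (hE : M.E = N.E) (hP : IsMatroidInter M N P) :
    ∀ X, P.Spanning X ↔ ∃ S T, M.Spanning S ∧ N.Spanning T ∧ X = S ∩ T := by
  obtain ⟨U, ⟨hUE, hUI⟩, rfl⟩ := hP
  simp only [Matroid.dual_ground, Matroid.dual_ground] at hUE
  intro X
  constructor
  · intro hX
    have hXE : X ⊆ M.E := by simpa [hUE] using hX.subset_ground
    have h1 : U.Indep (M.E \ X) := by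
      have := (Matroid.spanning_iff_compl_coindep (M := U✶) (S := X)
        (by simpa [hUE] using hXE)).mp hX
      simpa [Matroid.Coindep, Matroid.dual_dual, hUE] using this
    obtain ⟨I, J, hI, hJ, hIJ⟩ := (hUI _).mp h1
    refine ⟨M.E \ I, N.E \ J, Matroid.Coindep.compl_spanning hI,
      Matroid.Coindep.compl_spanning hJ, ?_⟩
    rw [← hE, Set.diff_inter_diff, ← hIJ, diff_diff_cancel_left hXE]
  · rintro ⟨S, T, hS, hT, rfl⟩
    have hSE := hS.subset_ground
    have hTE : T ⊆ M.E := hE ▸ hT.subset_ground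
    have h1 : U.Indep (M.E \ (S ∩ T)) := by
      rw [diff_inter]
      exact (hUI _).mpr ⟨M.E \ S, M.E \ T, (Matroid.spanning_iff_compl_coindep hSE).mp hS,
        by rw [hE]; exact (Matroid.spanning_iff_compl_coindep (hE ▸ hTE)).mp hT, rfl⟩
    rw [Matroid.spanning_iff_compl_coindep (by simpa [hUE] using inter_subset_left.trans hSE)]
    simpa [Matroid.Coindep, hUE] using h1
end

section
/- Let M and N be matroids on the same finite ground set E. Then the matroid intersection M ∧ N := (M* ∨ N*)* is a quotient of M, i.e., every flat of M ∧ N is a flat of M. -/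
open Matroid Set
open scoped Classical

variable {α : Type*}

lemma aux_base_iff {M : Matroid α} {B X : Set α} {e : α} (heX : e ∉ X)
    (hIX : M.IsBasis (B ∩ X) X) (hIY : M.IsBasis (B ∩ insert e X) (insert e X)) :
    e ∈ M.closure X ↔ e ∉ B := by
  constructor
  · intro hecl heB
    have h1 : B ∩ insert e X = insert e (B ∩ X) := by
      ext x; simp only [Set.mem_inter_iff, Set.mem_insert_iff]
      constructor
      · rintro ⟨hxB, rfl | hx⟩
        · exact Or.inl rfl
        · exact Or.inr ⟨hxB, hx⟩
      · rintro (rfl | ⟨hxB, hx⟩)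
        · exact ⟨heB, Or.inl rfl⟩
        · exact ⟨hxB, Or.inr hx⟩
    have heBX : e ∉ B ∩ X := fun h => heX h.2
    have h2 : (B ∩ insert e X) \ {e} = B ∩ X := by
      rw [h1, Set.insert_diff_of_mem _ (Set.mem_singleton e),
        Set.diff_singleton_eq_self heBX]
    have h3 : e ∈ B ∩ insert e X := ⟨heB, Set.mem_insert e X⟩
    have := hIY.indep.notMem_closure_diff_of_mem h3
    rw [h2, hIX.closure_eq_closure] at this
    exact this hecl
  · intro heB
    have h1 : B ∩ insert e X = B ∩ X := by
      ext x; simp only [Set.mem_inter_iff, Set.mem_insert_iff]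
      constructor
      · rintro ⟨hxB, rfl | hx⟩
        · exact absurd hxB heB
        · exact ⟨hxB, hx⟩
      · rintro ⟨hxB, hx⟩; exact ⟨hxB, Or.inr hx⟩
    rw [h1] at hIY
    have := hIY.subset_closure (Set.mem_insert e X)
    rwa [hIX.closure_eq_closure] at this

lemma mem_closure_iff_dual (M : Matroid α) {X : Set α} {e : α} (hX : X ⊆ M.E)
    (he : e ∈ M.E) (heX : e ∉ X) :
    e ∈ M.closure X ↔ e ∉ M✶.closure (M.E \ insert e X) := by
  obtain ⟨I, hI⟩ := M.exists_isBasis X hX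
  have hYE : insert e X ⊆ M.E := Set.insert_subset he hX
  obtain ⟨I', hI', hII'⟩ := hI.indep.subset_isBasis_of_subset
    (hI.subset.trans (Set.subset_insert e X)) hYE
  obtain ⟨B, hB, rfl⟩ := hI'.exists_isBase
  have hBX : M.IsBasis (B ∩ X) X := by
    have heq : I = B ∩ X := hI.eq_of_subset_indep
      (hB.indep.subset Set.inter_subset_left)
      (Set.subset_inter (fun x hx => (hII' hx).1) hI.subset) Set.inter_subset_right
    rwa [← heq]
  have h1 := aux_base_iff heX hBX hI'
  set Z := M.E \ insert e X with hZdef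
  have heZ : e ∉ Z := fun h => h.2 (Set.mem_insert e X)
  have hBd : M✶.IsBase (M.E \ B) := hB.compl_isBase_dual
  have hZ1 : M✶.IsBasis ((M.E \ B) ∩ Z) Z :=
    (hB.inter_isBasis_iff_compl_inter_isBasis_dual hYE).1 hI'
  have hinsZ : insert e Z = M.E \ X := by
    ext x
    simp only [Set.mem_insert_iff, hZdef, Set.mem_diff]
    constructor
    · rintro (rfl | ⟨hxE, hx⟩)
      · exact ⟨he, heX⟩
      · exact ⟨hxE, fun h => hx (Or.inr h)⟩
    · rintro ⟨hxE, hx⟩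
      by_cases hxe : x = e
      · exact Or.inl hxe
      · exact Or.inr ⟨hxE, fun h => h.elim hxe hx⟩
  have hZ2 : M✶.IsBasis ((M.E \ B) ∩ insert e Z) (insert e Z) := by
    rw [hinsZ]
    exact (hB.inter_isBasis_iff_compl_inter_isBasis_dual hX).1 hBX
  have h2 := aux_base_iff (M := M✶) heZ hZ1 hZ2
  rw [h1, h2]
  constructor
  · intro hB' h; exact h ⟨he, hB'⟩
  · intro h hB'; exact h fun hmem => hmem.2 hB'

lemma union_not_mem_closure {A B U : Matroid α} (hU : IsMatroidUnion A B U) {Z : Set α}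
    (hZ : Z ⊆ U.E) {e : α} (he : e ∈ U.E) (heZ : e ∉ Z) (h : e ∉ A.closure Z) :
    e ∉ U.closure Z := by
  obtain ⟨W, hW⟩ := U.exists_isBasis Z hZ
  obtain ⟨I, J, hI, hJ, hWIJ⟩ := (hU.2 W).1 hW.indep
  have hIZ : I ⊆ Z := (hWIJ ▸ Set.subset_union_left).trans hW.subset
  have h1 : e ∉ A.closure I := fun h' => h (A.closure_subset_closure hIZ h')
  have heA : e ∈ A.E := hU.1 ▸ he
  have heI : e ∉ I := fun h' => heZ (hIZ h')
  have hIe : A.Indep (insert e I) :=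
    (hI.insert_indep_iff_of_notMem heI).2 ⟨heA, h1⟩
  have hUe : U.Indep (insert e W) := by
    refine (hU.2 _).2 ⟨insert e I, J, hIe, hJ, ?_⟩
    rw [hWIJ, Set.insert_union]
  have heW : e ∉ W := fun h' => heZ (hW.subset h')
  rw [← hW.closure_eq_closure]
  exact (hW.indep.notMem_closure_iff_of_notMem heW he).2 hUe

/-- The matroid intersection `M ∧ N := (M* ∨ N*)*` of two matroids on the same finite
ground set is a quotient of `M`: every flat of `M ∧ N` is a flat of `M`. -/
theorem matroidInter_quotient (M N P : Matroid α) [M.Finite] [N.Finite]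
    (hE : M.E = N.E) (hP : IsMatroidInter M N P) :
    ∀ F, P.IsFlat F → M.IsFlat F := by
  intro F hF
  obtain ⟨U, hU, rfl⟩ := hP
  have hUE : U.E = M.E := hU.1
  have hFE : F ⊆ M.E := hF.subset_ground.trans (by rw [dual_ground, hUE])
  have hcl : M.closure F ⊆ F := by
    intro e he
    by_contra heF
    have heE : e ∈ M.E := M.closure_subset_ground F he
    have h1 : e ∉ M✶.closure (M.E \ insert e F) :=
      (mem_closure_iff_dual M hFE heE heF).1 he
    set Z := M.E \ insert e F with hZdef
    have hZU : Z ⊆ U.E := by rw [hUE]; exact Set.diff_subset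
    have heU : e ∈ U.E := by rw [hUE]; exact heE
    have heZ : e ∉ Z := fun h => h.2 (Set.mem_insert e F)
    have h2 : e ∉ U.closure Z := union_not_mem_closure hU hZU heU heZ h1
    have h3 : e ∈ U✶.closure F := by
      have hFU : F ⊆ U✶.E := by rw [dual_ground, hUE]; exact hFE
      have heU' : e ∈ U✶.E := by rw [dual_ground]; exact heU
      refine (mem_closure_iff_dual U✶ hFU heU' heF).2 ?_
      rw [dual_dual]
      have : U✶.E \ insert e F = Z := by rw [dual_ground, hUE]
      rwa [this]
    rw [hF.closure] at h3
    exact heF h3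
  rw [Matroid.isFlat_iff]
  refine ⟨fun I X hIF hIX => ?_, hFE⟩
  have hXcl := hIX.subset_closure
  rw [hIF.closure_eq_closure] at hXcl
  exact hXcl.trans hcl
end

section
/- Matroid intersection commutes with contraction: for matroids M, N on ground set E and any A ⊆ E, (M ∧ N)/A = (M/A) ∧ (N/A). -/
open Matroid Set
open scoped Classical

variable {α : Type*}

/-- Matroid intersection commutes with contraction: for matroids `M`, `N` on the same
ground set `E` and any `A ⊆ E`, `(M ∧ N)/A = (M/A) ∧ (N/A)`. -/
theorem matroidInter_contract (M N P Q : Matroid α) (A : Set α)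
    (hE : M.E = N.E) (hA : A ⊆ M.E)
    (hP : IsMatroidInter M N P)
    (hQ : IsMatroidInter (M.contract' A) (N.contract' A) Q) :
    P.contract' A = Q := by
  obtain ⟨U, hU, rfl⟩ := hP
  obtain ⟨V, hV, rfl⟩ := hQ
  have hMd : (M.contract' A)✶ = M✶ ↾ (M.E \ A) := by
    simp [Matroid.contract']
  have hNd : (N.contract' A)✶ = N✶ ↾ (N.E \ A) := by
    simp [Matroid.contract']
  have hUE : U.E = M.E := by simpa using hU.1
  have hVE : V.E = M.E \ A := by
    rw [hV.1, hMd]; simp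
  have key : U✶✶ ↾ (U✶.E \ A) = V := by
    refine Matroid.ext_indep ?_ ?_
    · simp [hUE, hVE]
    · intro I hI
      rw [Matroid.restrict_indep_iff, Matroid.dual_dual, hU.2, hV.2]
      constructor
      · rintro ⟨⟨I', J', hI', hJ', rfl⟩, hsub⟩
        rw [Matroid.dual_ground] at hsub
        refine ⟨I', J', ?_, ?_, rfl⟩
        · rw [hMd, Matroid.restrict_indep_iff]
          exact ⟨hI', (subset_union_left.trans hsub).trans (by rw [hUE])⟩
        · rw [hNd, Matroid.restrict_indep_iff]
          exact ⟨hJ', (subset_union_right.trans hsub).trans (by rw [hUE, hE])⟩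
      · rintro ⟨I', J', hI', hJ', rfl⟩
        rw [hMd, Matroid.restrict_indep_iff] at hI'
        rw [hNd, Matroid.restrict_indep_iff] at hJ'
        refine ⟨⟨I', J', hI'.1, hJ'.1, rfl⟩, ?_⟩
        rw [Matroid.dual_ground, hUE]
        exact union_subset hI'.2 (hJ'.2.trans (by rw [hE]))
  rw [Matroid.contract', key]
end

section
/- Let E be a finite set of size n, and for G ⊆ E with |G| ≤ n−2 let H_G := U_{|G|,G} ⊕ U_{|G^c|−1,G^c} be the corank-one matroid with coloop set G. Given a chain G_1 ⊊ ⋯ ⊊ G_k with |G_k| ≤ n−2, the bases of the matroid intersection M_G := H_{G_1} ∧ ⋯ ∧ H_{G_k} are exactly the (n−k)-element subsets B ⊆ E satisfying |G_i \ B| ≤ i−1 for all i = 1,…,k. -/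
open Matroid Set
open scoped Classical

variable {α : Type*}

/-- `U` is the uniform matroid of rank `r` on the ground set `S`: its bases are exactly the
`r`-element subsets of `S`. -/
def IsUnifOn (S : Set α) (r : ℕ) (U : Matroid α) : Prop :=
  U.E = S ∧ ∀ B, U.IsBase B ↔ B ⊆ S ∧ B.encard = r

/-- `H` is the corank-one matroid `H_G := U_{|G|,G} ⊕ U_{|Gᶜ|-1,Gᶜ}` on the ground set
`univ` whose set of coloops is `G`. -/
def IsHG (G : Set α) (H : Matroid α) : Prop :=
  ∃ (U' : Matroid α) (hd : Disjoint (Matroid.freeOn G).E U'.E),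
    IsUnifOn Gᶜ (Gᶜ.ncard - 1) U' ∧ H = (Matroid.freeOn G).disjointSum U' hd

/-- `P` is the iterated matroid intersection of a list of matroids (the empty intersection
being the free matroid `U_{n,n}` on the ground set `univ`). -/
def IsFoldInter : List (Matroid α) → Matroid α → Prop
  | [], P => P = Matroid.freeOn Set.univ
  | M :: l, P => ∃ Q, IsFoldInter l Q ∧ IsMatroidInter M Q P

lemma IsHG.ground_eq {G : Set α} {Hm : Matroid α} (h : IsHG G Hm) : Hm.E = univ := by
  obtain ⟨U', hd, ⟨hUE, -⟩, rfl⟩ := h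
  simp [hUE]

lemma IsHG.dual_indep_iff [Fintype α] {G : Set α} {Hm : Matroid α} (h : IsHG G Hm)
    (X : Set α) : Hm✶.Indep X ↔ X = ∅ ∨ ∃ e ∉ G, X = {e} := by
  obtain ⟨U', hd, ⟨hUE, hUB⟩, rfl⟩ := h
  have hE : ((Matroid.freeOn G).disjointSum U' hd).E = univ := by simp [hUE]
  rw [Matroid.dual_indep_iff_exists']
  constructor
  · rintro ⟨-, B, hB, hdisj⟩
    rw [Matroid.disjointSum_isBase_iff] at hB
    obtain ⟨hB1, hB2, -⟩ := hB
    rw [Matroid.freeOn_ground, Matroid.freeOn_isBase_iff] at hB1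
    rw [hUE, hUB] at hB2
    obtain ⟨hBc, hBcard⟩ := hB2
    have hGB : G ⊆ B := by rw [← hB1]; exact inter_subset_left
    have hsub : X ⊆ Gᶜ \ (B ∩ Gᶜ) := by
      intro x hx
      have hxB : x ∉ B := fun hxB => hdisj.ne_of_mem hx hxB rfl
      exact ⟨fun hxG => hxB (hGB hxG), fun hx2 => hxB hx2.1⟩
    have hcard : (B ∩ Gᶜ).ncard = Gᶜ.ncard - 1 := by
      rw [← Set.Finite.cast_ncard_eq (Set.toFinite _)] at hBcard
      exact_mod_cast hBcard
    have hle : (Gᶜ \ (B ∩ Gᶜ)).ncard ≤ 1 := by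
      rw [Set.ncard_diff inter_subset_right (Set.toFinite _), hcard]
      omega
    have hX1 : X.ncard ≤ 1 := le_trans (Set.ncard_le_ncard hsub (Set.toFinite _)) hle
    rcases (Set.ncard_le_one_iff_eq (Set.toFinite _)).1 hX1 with h0 | ⟨a, ha⟩
    · exact Or.inl h0
    · exact Or.inr ⟨a, fun haG => (hsub (by simp [ha])).1 haG, ha⟩
  · intro hX
    have hXc : X ⊆ Gᶜ ∧ Gᶜ.ncard - 1 ≤ (Gᶜ \ X).ncard := by
      rcases hX with rfl | ⟨e, heG, rfl⟩
      · simp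
      · refine ⟨by simpa using heG, ?_⟩
        rw [Set.ncard_diff (by simpa using heG) (Set.toFinite _)]
        simp
    obtain ⟨B', hB'sub, hB'card⟩ :=
      Set.exists_subset_encard_eq (k := ((Gᶜ.ncard - 1 : ℕ) : ℕ∞))
        (by rw [← Set.Finite.cast_ncard_eq (Set.toFinite (Gᶜ \ X))]
            exact_mod_cast hXc.2)
    have hB'G : B' ⊆ Gᶜ := hB'sub.trans diff_subset
    refine ⟨by rw [hE]; exact subset_univ _, G ∪ B', ?_, ?_⟩
    · rw [Matroid.disjointSum_isBase_iff]
      refine ⟨?_, ?_, by rw [Matroid.freeOn_ground, hUE]; simp⟩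
      · rw [Matroid.freeOn_ground, Matroid.freeOn_isBase_iff]
        rw [union_inter_distrib_right, inter_comm B' G,
          (subset_compl_iff_disjoint_left.1 hB'G).inter_eq]
        simp
      · rw [hUE, hUB]
        rw [union_inter_distrib_right, inter_compl_self, empty_union,
          inter_eq_left.2 hB'G]
        exact ⟨hB'G, hB'card⟩
    · refine Disjoint.union_right ?_ ?_
      · exact disjoint_compl_left.mono_left hXc.1
      · exact disjoint_sdiff_right.mono_right hB'sub

/-- The "system of distinct representatives" predicate describing independent sets of the
dual of a chain product. -/
def SDRk : ℕ → (ℕ → Set α) → Set α → Prop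
  | 0, _, X => X = ∅
  | (k+1), G, X =>
      ∃ I Y, (I = ∅ ∨ ∃ e ∉ G 0, I = {e}) ∧ SDRk k (fun i => G (i+1)) Y ∧ X = I ∪ Y

lemma sdrk_empty : ∀ (k : ℕ) (G : ℕ → Set α), SDRk k G (∅ : Set α)
  | 0, _ => rfl
  | (k+1), G => ⟨∅, ∅, Or.inl rfl, sdrk_empty k _, by simp⟩

/-- The dual of an iterated intersection of corank-one matroids has independent sets
described by `SDRk`. -/
lemma foldInter_dual_indep [Fintype α] : ∀ (k : ℕ) (G : ℕ → Set α) (H : ℕ → Matroid α),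
    (∀ i < k, IsHG (G i) (H i)) → ∀ P : Matroid α,
    IsFoldInter (List.ofFn fun i : Fin k => H i) P →
    P.E = univ ∧ ∀ X, (P✶.Indep X ↔ SDRk k G X) := by
  intro k
  induction k with
  | zero =>
    intro G H _ P hP
    have hP' : P = Matroid.freeOn Set.univ := hP
    subst hP'
    refine ⟨by simp, fun X => ?_⟩
    show _ ↔ X = ∅
    rw [Matroid.freeOn, Matroid.dual_dual, Matroid.loopyOn_indep_iff]
  | succ k ih =>
    intro G H hH P hP
    rw [List.ofFn_succ] at hP
    obtain ⟨Q, hQ, U, ⟨hUE, hUind⟩, rfl⟩ := hP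
    simp only [Fin.val_zero] at hUE hUind
    have htail : (List.ofFn fun i : Fin k => H i.succ) =
        (List.ofFn fun i : Fin k => (fun j => H (j+1)) i) := by
      congr 1
    rw [htail] at hQ
    obtain ⟨hQE, hQind⟩ := ih (fun i => G (i+1)) (fun i => H (i+1))
      (fun i hi => hH (i+1) (by omega)) Q hQ
    have hU2 : U✶✶ = U := Matroid.dual_dual U
    have hE : U✶.E = univ := by
      rw [Matroid.dual_ground, hUE, Matroid.dual_ground, (hH 0 (by omega)).ground_eq]
    refine ⟨hE, fun X => ?_⟩
    rw [hU2, hUind X]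
    show _ ↔ ∃ I Y, _
    constructor
    · rintro ⟨I, J, hI, hJ, rfl⟩
      exact ⟨I, J, ((hH 0 (by omega)).dual_indep_iff I).1 hI, (hQind J).1 hJ, rfl⟩
    · rintro ⟨I, J, hI, hJ, rfl⟩
      exact ⟨I, J, ((hH 0 (by omega)).dual_indep_iff I).2 hI, (hQind J).2 hJ, rfl⟩

/-- For a strictly increasing chain, `SDRk` is equivalent to cardinality bounds. -/
lemma sdrk_iff [Fintype α] : ∀ (k : ℕ) (G : ℕ → Set α),
    (∀ i j, i < j → j < k → G i ⊂ G j) → ∀ X : Set α,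
    SDRk k G X ↔ X.ncard ≤ k ∧ ∀ i < k, (X ∩ G i).ncard ≤ i := by
  intro k
  induction k with
  | zero =>
    intro G _ X
    constructor
    · rintro rfl; simp
    · rintro ⟨h0, -⟩
      exact (Set.ncard_eq_zero (Set.toFinite _)).1 (Nat.le_zero.1 h0)
  | succ k ih =>
    intro G hch X
    have hch' : ∀ i j, i < j → j < k → G (i+1) ⊂ G (j+1) :=
      fun i j h1 h2 => hch _ _ (by omega) (by omega)
    constructor
    · rintro ⟨I, Y, hI, hY, rfl⟩
      have hI1 : I.ncard ≤ 1 ∧ I ∩ G 0 = ∅ := by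
        rcases hI with rfl | ⟨e, heG, rfl⟩
        · simp
        · exact ⟨by simp, by simpa using heG⟩
      obtain ⟨hYc, hYb⟩ := (ih _ hch' Y).1 hY
      have hY0 : Y ∩ G 0 = ∅ := by
        rcases k with _ | k'
        · have hY' : Y = ∅ := hY
          simp [hY']
        · have h1 : (Y ∩ G 1).ncard ≤ 0 := hYb 0 (by omega)
          have h2 : Y ∩ G 1 = ∅ := (Set.ncard_eq_zero (Set.toFinite _)).1 (Nat.le_zero.1 h1)
          have h3 : Y ∩ G 0 ⊆ Y ∩ G 1 :=
            inter_subset_inter_right _ (hch 0 1 (by omega) (by omega)).subset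
          exact eq_empty_of_subset_empty (h2 ▸ h3)
      refine ⟨?_, ?_⟩
      · exact le_trans (Set.ncard_union_le _ _) (by omega)
      · intro i hi
        rcases i with _ | j
        · rw [union_inter_distrib_right, hI1.2, hY0]
          simp
        · rw [union_inter_distrib_right]
          refine le_trans (Set.ncard_union_le _ _) ?_
          have h4 : (I ∩ G (j+1)).ncard ≤ 1 :=
            le_trans (Set.ncard_le_ncard inter_subset_left (Set.toFinite _)) hI1.1
          have h5 : (Y ∩ G (j+1)).ncard ≤ j := hYb j (by omega)
          omega
    · rintro ⟨hc, hb⟩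
      have h0 : X ∩ G 0 = ∅ :=
        (Set.ncard_eq_zero (Set.toFinite _)).1 (Nat.le_zero.1 (hb 0 (by omega)))
      rcases X.eq_empty_or_nonempty with rfl | hne
      · exact ⟨∅, ∅, Or.inl rfl, sdrk_empty k _, by simp⟩
      · -- choose a representative `e`
        obtain ⟨e, heX, key⟩ : ∃ e, e ∈ X ∧
            ∀ i, i < k + 1 → (X ∩ G i).Nonempty → e ∈ G i := by
          by_cases hj : ∃ j, j < k + 1 ∧ (X ∩ G j).Nonempty
          · have hspec := Nat.find_spec hj
            obtain ⟨hj₀k, e, heX, heG⟩ := hspec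
            refine ⟨e, heX, fun i hik hne' => ?_⟩
            have hmin : Nat.find hj ≤ i := Nat.find_min' hj ⟨hik, hne'⟩
            rcases eq_or_lt_of_le hmin with heq | hlt
            · exact heq ▸ heG
            · exact (hch _ i hlt hik).subset heG
          · obtain ⟨e, heX⟩ := hne
            exact ⟨e, heX, fun i hik hne' => absurd ⟨i, hik, hne'⟩ hj⟩
        have heG0 : e ∉ G 0 := fun h => by
          have : e ∈ X ∩ G 0 := ⟨heX, h⟩
          rw [h0] at this; exact this
        refine ⟨{e}, X \ {e}, Or.inr ⟨e, heG0, rfl⟩, (ih _ hch' _).2 ⟨?_, ?_⟩, ?_⟩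
        · rw [Set.ncard_diff_singleton_of_mem heX]
          have := hne.ncard_pos (Set.toFinite _)
          omega
        · intro i hi
          by_cases hne2 : (X ∩ G (i+1)).Nonempty
          · have heGi : e ∈ G (i+1) := key (i+1) (by omega) hne2
            have hset : (X \ {e}) ∩ G (i+1) = (X ∩ G (i+1)) \ {e} := by
              ext x
              simp only [mem_inter_iff, mem_diff, mem_singleton_iff]
              tauto
            rw [hset, Set.ncard_diff_singleton_of_mem (show e ∈ X ∩ G (i+1) from ⟨heX, heGi⟩)]
            have := hb (i+1) (by omega)
            omega
          · rw [not_nonempty_iff_eq_empty] at hne2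
            have : (X \ {e}) ∩ G (i+1) ⊆ X ∩ G (i+1) :=
              inter_subset_inter_left _ diff_subset
            rw [hne2] at this
            simp [eq_empty_of_subset_empty this]
        · exact (Set.union_diff_cancel (singleton_subset_iff.2 heX)).symm

/-- The bases of the chain product `M_𝒢 = H_{G_1} ∧ ⋯ ∧ H_{G_k}` for a chain
`G_1 ⊊ ⋯ ⊊ G_k` with `|G_k| ≤ n - 2` (here `0`-indexed: `G 0 ⊊ ⋯ ⊊ G (k-1)`) are exactly
the `(n-k)`-element sets `B` with `|G_i \ B| ≤ i - 1` for all `i = 1, …, k`. -/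
theorem chainProduct_base_iff [Fintype α] {k : ℕ} (hk : 1 ≤ k) (G : ℕ → Set α)
    (hchain : ∀ i j, i < j → j < k → G i ⊂ G j)
    (hsize : (G (k - 1)).ncard ≤ Fintype.card α - 2)
    (H : ℕ → Matroid α) (hH : ∀ i < k, IsHG (G i) (H i))
    (P : Matroid α) (hP : IsFoldInter (List.ofFn fun i : Fin k => H i) P) :
    ∀ B, P.IsBase B ↔ B.ncard = Fintype.card α - k ∧ ∀ i < k, (G i \ B).ncard ≤ i := by
  obtain ⟨hE, hInd⟩ := foldInter_dual_indep k G H hH P hP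
  have hIndep : ∀ X : Set α, P✶.Indep X ↔ X.ncard ≤ k ∧ ∀ i < k, (X ∩ G i).ncard ≤ i :=
    fun X => (hInd X).trans (sdrk_iff k G hchain X)
  rcases isEmpty_or_nonempty α with hα | hα
  · intro B
    have hBe : B = ∅ := Set.eq_empty_of_isEmpty B
    subst hBe
    refine iff_of_true ?_ ⟨?_, ?_⟩
    · obtain ⟨B₀, hB₀⟩ := P.exists_isBase
      rwa [Set.eq_empty_of_isEmpty B₀] at hB₀
    · simp [Fintype.card_eq_zero]
    · intro i hi
      simp [Set.eq_empty_of_isEmpty (G i)]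
  · have hn1 : 1 ≤ Fintype.card α := Fintype.card_pos
    have hmono : ∀ i j, i ≤ j → j < k → G i ⊆ G j := by
      intro i j hij hjk
      rcases eq_or_lt_of_le hij with rfl | h
      · exact subset_rfl
      · exact (hchain _ _ h hjk).subset
    have hcard2 : ∀ i d, i + d < k → (G i).ncard + d ≤ (G (i+d)).ncard := by
      intro i d
      induction d with
      | zero => simp
      | succ d ihd =>
        intro hlt
        have h1 := ihd (by omega)
        have h2 := Set.ncard_lt_ncard (hchain (i+d) (i+d+1) (by omega) (by omega))
          (Set.toFinite _)
        have h3 : i + (d+1) = (i+d)+1 := by omega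
        rw [h3]
        omega
    have hbase : ∀ X : Set α, P✶.IsBase X ↔ X.ncard = k ∧ ∀ i < k, (X ∩ G i).ncard ≤ i := by
      intro X
      constructor
      · intro hX
        obtain ⟨hXk, hXb⟩ := (hIndep X).1 hX.indep
        refine ⟨?_, hXb⟩
        by_contra hne
        have hm : X.ncard < k := lt_of_le_of_ne hXk hne
        have hP0 : 0 < k ∧ (X ∩ G 0).ncard = 0 := ⟨hk, Nat.le_zero.1 (hXb 0 hk)⟩
        set Pred : ℕ → Prop := fun i => i < k ∧ (X ∩ G i).ncard = i with hPreddef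
        set i₀ := Nat.findGreatest Pred k with hi₀def
        have hspec : Pred i₀ := Nat.findGreatest_spec (Nat.zero_le k) hP0
        obtain ⟨hi₀k, hi₀t⟩ := hspec
        have hgreat : ∀ j, i₀ < j → j < k → (X ∩ G j).ncard ≠ j := by
          intro j h1 h2 hq
          exact Nat.findGreatest_is_greatest h1 (le_of_lt h2) ⟨h2, hq⟩
        have hA : (G i₀).ncard + (k - 1 - i₀) ≤ (G (k-1)).ncard := by
          have h4 := hcard2 i₀ (k - 1 - i₀) (by omega)
          have heq : i₀ + (k - 1 - i₀) = k - 1 := by omega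
          rwa [heq] at h4
        have hsplit : (X ∩ G i₀).ncard + (X \ G i₀).ncard = X.ncard :=
          Set.ncard_inter_add_ncard_diff_eq_ncard X (G i₀) (Set.toFinite _)
        have hU : (G i₀ ∪ X).ncard < Fintype.card α := by
          have h5 : G i₀ ∪ X = G i₀ ∪ (X \ G i₀) := by rw [union_diff_self]
          have h6 : (G i₀ ∪ X).ncard ≤ (G i₀).ncard + (X \ G i₀).ncard := by
            rw [h5]; exact Set.ncard_union_le _ _
          omega
        have hne_univ : G i₀ ∪ X ≠ univ := by
          intro h
          rw [h, Set.ncard_univ, Nat.card_eq_fintype_card] at hU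
          omega
        obtain ⟨e, he⟩ := (Set.ne_univ_iff_exists_notMem _).1 hne_univ
        have heG : e ∉ G i₀ := fun h => he (Or.inl h)
        have heX : e ∉ X := fun h => he (Or.inr h)
        have hins : P✶.Indep (insert e X) := by
          rw [hIndep]
          refine ⟨?_, ?_⟩
          · have := Set.ncard_insert_of_notMem heX (Set.toFinite _)
            omega
          · intro i hi
            by_cases hii : i ≤ i₀
            · have hGsub : G i ⊆ G i₀ := hmono i i₀ hii hi₀k
              have h7 : insert e X ∩ G i = X ∩ G i := by
                ext x
                simp only [mem_inter_iff, mem_insert_iff]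
                constructor
                · rintro ⟨rfl | hx, hg⟩
                  · exact absurd (hGsub hg) heG
                  · exact ⟨hx, hg⟩
                · exact fun ⟨hx, hg⟩ => ⟨Or.inr hx, hg⟩
              rw [h7]
              exact hXb i hi
            · have hlt : i₀ < i := by omega
              have hne2 : (X ∩ G i).ncard ≠ i := hgreat i hlt hi
              have hle2 : (X ∩ G i).ncard ≤ i := hXb i hi
              have hsub : insert e X ∩ G i ⊆ insert e (X ∩ G i) := by
                intro x
                simp only [mem_inter_iff, mem_insert_iff]
                tauto
              have h8 := Set.ncard_le_ncard hsub (Set.toFinite _)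
              have h9 := Set.ncard_insert_le e (X ∩ G i)
              omega
        have h10 := hX.eq_of_subset_indep hins (subset_insert e X)
        have : e ∈ X := by rw [h10]; exact mem_insert e X
        exact heX this
      · rintro ⟨hXk, hXb⟩
        have hXi : P✶.Indep X := (hIndep X).2 ⟨le_of_eq hXk, hXb⟩
        refine hXi.isBase_of_maximal fun J hJ hXJ => ?_
        have hJk : J.ncard ≤ k := ((hIndep J).1 hJ).1
        exact Set.eq_of_subset_of_ncard_le hXJ (by omega) (Set.toFinite _)
    have hkn : k ≤ Fintype.card α := by
      obtain ⟨B₀, hB₀⟩ := P✶.exists_isBase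
      have h1 := ((hbase B₀).1 hB₀).1
      have h2 : B₀.ncard ≤ Fintype.card α := by
        have := Set.ncard_le_ncard (subset_univ B₀) (Set.toFinite _)
        rwa [Set.ncard_univ, Nat.card_eq_fintype_card] at this
      omega
    intro B
    have hcompl : P✶.E \ B = Bᶜ := by
      rw [Matroid.dual_ground, hE]
      exact (Set.compl_eq_univ_diff B).symm
    have hdual : P.IsBase B ↔ P✶.IsBase Bᶜ := by
      conv_lhs => rw [← Matroid.dual_dual P]
      rw [Matroid.dual_isBase_iff (by rw [Matroid.dual_ground, hE]; exact subset_univ _), hcompl]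
    rw [hdual, hbase Bᶜ]
    have hsum : B.ncard + Bᶜ.ncard = Fintype.card α := by
      have := Set.ncard_add_ncard_compl B (Set.toFinite _) (Set.toFinite _)
      rwa [Nat.card_eq_fintype_card] at this
    have hGB : ∀ i, Bᶜ ∩ G i = G i \ B := fun i => (Set.diff_eq_compl_inter).symm
    simp only [hGB]
    constructor
    · rintro ⟨h1, h2⟩; exact ⟨by omega, h2⟩
    · rintro ⟨h1, h2⟩; exact ⟨by omega, h2⟩
end

section
/- With notation as above, the chain product M_G := H_{G_1} ∧ ⋯ ∧ H_{G_k} for a chain G_1 ⊊ ⋯ ⊊ G_k with |G_k| ≤ n−2 is the transversal matroid M[A] with presentation A consisting of |G_1| copies of G_1, followed by |G_{i} \ G_{i−1}|−1 copies of G_i for i = 2,…,k, followed by |G_k^c|−1 copies of E. -/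
open Matroid Set
open scoped Classical

variable {α : Type*}

section AuxChainProduct

variable {α : Type*}

/-- Auxiliary: partial transversal of a function-indexed family. -/
def PTfAux (s : ℕ → Set α) (k : ℕ) (X : Set α) : Prop :=
  ∃ f : X → Fin k, Function.Injective f ∧ ∀ x : X, (x : α) ∈ s (f x)

lemma ncardAux_le_of_inj {X : Set α} {m : ℕ} (f : X → Fin m) (hf : Function.Injective f) :
    X.ncard ≤ m := by
  have := Nat.card_le_card_of_injective f hf
  simpa [Nat.card_coe_set_eq] using this

lemma encardNcardAux {s : Set α} (hs : s.Finite) : s.encard = (s.ncard : ℕ∞) := by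
  rw [Set.ncard_def]; exact hs.encard_eq_coe

lemma ptfAux_forward [Finite α] {k : ℕ} {s : ℕ → Set α} {X : Set α}
    (hmono : ∀ p q, p ≤ q → q < k → s p ⊆ s q) (h : PTfAux s k X) :
    X.ncard ≤ k ∧ ∀ q < k, (X \ s q).ncard + q + 1 ≤ k := by
  obtain ⟨f, hinj, hmem⟩ := h
  refine ⟨ncardAux_le_of_inj f hinj, fun q hq => ?_⟩
  have key : ∀ x : α, ∀ hx : x ∈ X \ s q, q < (f ⟨x, hx.1⟩ : ℕ) := by
    intro x hx
    by_contra hle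
    exact hx.2 (hmono _ q (by omega) hq (hmem ⟨x, hx.1⟩))
  set φ : (X \ s q : Set α) → Fin (k - q - 1) := fun x =>
    ⟨(f ⟨x.1, x.2.1⟩ : ℕ) - q - 1, by
      have h1 := key x.1 x.2
      have h2 := (f ⟨x.1, x.2.1⟩).2
      omega⟩ with hφ
  have hφinj : Function.Injective φ := by
    intro a b hab
    have h1 := key a.1 a.2
    have h2 := key b.1 b.2
    have h3 : (f ⟨a.1, a.2.1⟩ : ℕ) - q - 1 = (f ⟨b.1, b.2.1⟩ : ℕ) - q - 1 :=
      congrArg Fin.val hab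
    have h4 : f ⟨a.1, a.2.1⟩ = f ⟨b.1, b.2.1⟩ := Fin.ext (by omega)
    have h5 := hinj h4
    have h6 : (a : α) = (b : α) := congrArg (fun z : X => (z : α)) h5
    exact Subtype.ext h6
  have := ncardAux_le_of_inj φ hφinj
  omega

lemma ptfAux_backward [Finite α] : ∀ (k : ℕ) (s : ℕ → Set α) (X : Set α),
    (∀ p q, p ≤ q → q < k → s p ⊆ s q) →
    X.ncard ≤ k → (∀ q < k, (X \ s q).ncard + q + 1 ≤ k) → PTfAux s k X := by
  intro k
  induction k with
  | zero =>
    intro s X _ hX _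
    have : X = ∅ := by
      rw [← Set.ncard_eq_zero (Set.toFinite X)]; omega
    exact ⟨fun x => absurd x.2 (by simp [this]), fun a => absurd a.2 (by simp [this]),
      fun x => absurd x.2 (by simp [this])⟩
  | succ k ih =>
    intro s X hmono hX hcond
    by_cases hx : ∃ x, x ∈ X ∩ s 0
    · obtain ⟨x, hxX, hxs⟩ := hx
      set X' := X \ {x} with hX'
      have h1 : X'.ncard ≤ k := by
        have := Set.ncard_diff_singleton_of_mem hxX
        rw [← hX'] at this
        have hXpos : 0 < X.ncard := (Set.ncard_pos (Set.toFinite X)).2 ⟨x, hxX⟩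
        omega
      have h2 : ∀ q < k, (X' \ s (q + 1)).ncard + q + 1 ≤ k := by
        intro q hq
        have hs : (X' \ s (q + 1)).ncard ≤ (X \ s (q + 1)).ncard :=
          Set.ncard_le_ncard (Set.diff_subset_diff_left Set.diff_subset) (Set.toFinite _)
        have := hcond (q + 1) (by omega)
        omega
      obtain ⟨f', hinj', hmem'⟩ := ih (fun q => s (q + 1)) X'
        (fun p q hpq hq => hmono (p + 1) (q + 1) (by omega) (by omega)) h1 h2
      refine ⟨fun y => if h : (y : α) = x then 0 else
          (f' ⟨y.1, y.2, by simpa using h⟩).succ, ?_, ?_⟩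
      · intro a b hab
        by_cases ha : (a : α) = x <;> by_cases hb : (b : α) = x
        · exact Subtype.ext (ha.trans hb.symm)
        · simp only [ha, hb, dif_pos, dif_neg, not_false_iff] at hab
          exact absurd hab.symm (Fin.succ_ne_zero _)
        · simp only [ha, hb, dif_pos, dif_neg, not_false_iff] at hab
          exact absurd hab (Fin.succ_ne_zero _)
        · simp only [ha, hb, dif_neg, not_false_iff] at hab
          have h5 := hinj' (Fin.succ_injective _ hab)
          have h6 : (a : α) = (b : α) := congrArg (fun z : X' => (z : α)) h5
          exact Subtype.ext h6
      · intro y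
        by_cases h : (y : α) = x
        · simp only [h, dif_pos]
          exact hxs
        · simp only [h, dif_neg, not_false_iff]
          have := hmem' ⟨y.1, y.2, by simpa using h⟩
          simpa [Fin.val_succ] using this
    · push_neg at hx
      have hXs : X \ s 0 = X := by
        ext y; simp only [Set.mem_diff, and_iff_left_iff_imp]
        intro hy hys; exact hx y ⟨hy, hys⟩
      have h1 : X.ncard ≤ k := by
        have := hcond 0 (by omega); rw [hXs] at this; omega
      have h2 : ∀ q < k, (X \ s (q + 1)).ncard + q + 1 ≤ k := by
        intro q hq; have := hcond (q + 1) (by omega); omega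
      obtain ⟨f', hinj', hmem'⟩ := ih (fun q => s (q + 1)) X
        (fun p q hpq hq => hmono (p + 1) (q + 1) (by omega) (by omega)) h1 h2
      refine ⟨fun y => (f' y).succ, fun a b hab => hinj' (Fin.succ_injective _ hab), fun y => ?_⟩
      simpa [Fin.val_succ] using hmem' y

lemma sdrAux_forward [Finite α] {k : ℕ} {t : ℕ → Set α}
    (hanti : ∀ i j, i ≤ j → j < k → t j ⊆ t i)
    (g : Fin k → α) (hg : Function.Injective g) (hmem : ∀ i : Fin k, g i ∈ t (i : ℕ)) :
    ∀ i < k, k ≤ (t i).ncard + i := by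
  intro i hi
  set φ : Fin (k - i) → t i := fun m =>
    ⟨g ⟨i + m, by omega⟩, hanti i (i + m) (by omega) (by omega) (hmem ⟨i + m, by omega⟩)⟩ with hφ
  have hφinj : Function.Injective φ := by
    intro a b hab
    have h1 : g ⟨i + a, by omega⟩ = g ⟨i + b, by omega⟩ :=
      congrArg (fun z : t i => (z : α)) hab
    have h2 := hg h1
    have h3 : i + (a : ℕ) = i + (b : ℕ) := congrArg Fin.val h2
    exact Fin.ext (by omega)
  have := Nat.card_le_card_of_injective φ hφinj
  simp only [Nat.card_eq_fintype_card, Fintype.card_fin, Nat.card_coe_set_eq] at this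
  omega

lemma sdrAux_backward [Finite α] : ∀ (k : ℕ) (t : ℕ → Set α),
    (∀ i < k, k ≤ (t i).ncard + i) →
    ∃ g : Fin k → α, Function.Injective g ∧ ∀ i : Fin k, g i ∈ t (i : ℕ) := by
  intro k
  induction k with
  | zero => exact fun t _ => ⟨Fin.elim0, fun a => a.elim0, fun a => a.elim0⟩
  | succ k ih =>
    intro t hcond
    obtain ⟨g', hinj', hmem'⟩ := ih (fun i => t (i + 1)) (fun i hi => by
      have := hcond (i + 1) (by omega)
      show k ≤ (t (i + 1)).ncard + i
      omega)
    have hrange : (Set.range g').ncard ≤ k := by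
      rw [← Set.image_univ]
      calc (g' '' Set.univ).ncard ≤ (Set.univ : Set (Fin k)).ncard :=
            Set.ncard_image_le (Set.toFinite _)
        _ = k := by simp [Set.ncard_univ]
    have hex : ∃ x, x ∈ t 0 ∧ x ∉ Set.range g' := by
      by_contra hcon
      push_neg at hcon
      have hsub : t 0 ⊆ Set.range g' := fun x hx => hcon x hx
      have := Set.ncard_le_ncard hsub (Set.toFinite _)
      have h0 := hcond 0 (by omega)
      omega
    obtain ⟨x, hxt, hxr⟩ := hex
    refine ⟨fun i => if h : i = 0 then x else g' (i.pred h), ?_, ?_⟩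
    · intro a b hab
      by_cases ha : a = 0 <;> by_cases hb : b = 0
      · rw [ha, hb]
      · simp only [ha, hb, dif_pos, dif_neg, not_false_iff] at hab
        exact absurd ⟨_, hab.symm⟩ hxr
      · simp only [ha, hb, dif_pos, dif_neg, not_false_iff] at hab
        exact absurd ⟨_, hab⟩ hxr
      · simp only [ha, hb, dif_neg, not_false_iff] at hab
        have := hinj' hab
        have h2 : (a : Fin (k+1)).pred ha = b.pred hb := this
        rwa [Fin.pred_inj] at h2
    · intro i
      by_cases h : i = 0
      · simp only [h, dif_pos]
        exact hxt
      · simp only [h, dif_neg, not_false_iff]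
        have := hmem' (i.pred h)
        have hval : ((i.pred h : Fin k) : ℕ) + 1 = (i : ℕ) := by
          have : (i : ℕ) ≠ 0 := fun hc => h (Fin.ext hc)
          simp [Fin.coe_pred]
          omega
        rwa [hval] at this

lemma blockGetDAux (F : ℕ → List (Set α)) : ∀ m q, q < ((List.range m).flatMap F).length →
    ∃ i, i < m ∧ ((List.range i).flatMap F).length ≤ q ∧
      q < ((List.range (i+1)).flatMap F).length ∧
      ((List.range m).flatMap F).getD q ∅
        = (F i).getD (q - ((List.range i).flatMap F).length) ∅ := by
  intro m
  induction m with
  | zero => intro q hq; simp at hq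
  | succ m ih =>
    intro q hq
    rw [List.range_succ, List.flatMap_append] at hq ⊢
    simp only [List.flatMap_cons, List.flatMap_nil, List.append_nil] at hq ⊢
    by_cases hcase : q < ((List.range m).flatMap F).length
    · obtain ⟨i, h1, h2, h3, h4⟩ := ih q hcase
      exact ⟨i, by omega, h2, h3, by rw [List.getD_append _ _ _ _ hcase]; exact h4⟩
    · push_neg at hcase
      refine ⟨m, by omega, hcase, ?_, ?_⟩
      · rw [List.range_succ, List.flatMap_append]
        simp only [List.flatMap_cons, List.flatMap_nil, List.append_nil, List.length_append]
        rw [List.length_append] at hq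
        omega
      · rw [List.getD_append_right _ _ _ _ hcase]

end AuxChainProduct

/-- `X` is a partial transversal of the set system given by the list `L`. -/
def IsPartialTransversal (L : List (Set α)) (X : Set α) : Prop :=
  ∃ f : X → Fin L.length, Function.Injective f ∧ ∀ x : X, (x : α) ∈ L.get (f x)

section MatroidAuxChainProduct

variable {α : Type*}

lemma isHG_dualAux [Fintype α] {G : Set α} {H : Matroid α} (h : IsHG G H) :
    H.E = univ ∧ ∀ J, H✶.Indep J ↔ J ⊆ Gᶜ ∧ J.Subsingleton := by
  obtain ⟨U', hd, ⟨hUE, hUB⟩, rfl⟩ := h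
  have hE : ((Matroid.freeOn G).disjointSum U' hd).E = univ := by
    rw [Matroid.disjointSum_ground_eq, Matroid.freeOn_ground, hUE, union_compl_self]
  set c := Gᶜ.ncard with hc
  have hbase : ∀ B, ((Matroid.freeOn G).disjointSum U' hd).IsBase B ↔
      (G ⊆ B ∧ (B ∩ Gᶜ).ncard = c - 1 ∧ B ⊆ univ) := by
    intro B
    rw [Matroid.disjointSum_isBase_iff]
    rw [Matroid.freeOn_ground, hUE, Matroid.freeOn_isBase_iff]
    constructor
    · rintro ⟨h1, h2, h3⟩
      rw [hUB] at h2
      refine ⟨by rw [← h1]; exact inter_subset_left, ?_, by simp⟩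
      have := h2.2
      rw [encardNcardAux (Set.toFinite _)] at this
      exact_mod_cast this
    · rintro ⟨h1, h2, -⟩
      refine ⟨?_, ?_, by rw [union_compl_self]; exact subset_univ B⟩
      · exact subset_antisymm inter_subset_right (subset_inter h1 Subset.rfl)
      · rw [hUB]
        refine ⟨inter_subset_right, ?_⟩
        rw [encardNcardAux (Set.toFinite _)]
        exact_mod_cast h2
  refine ⟨hE, fun J => ?_⟩
  rw [Matroid.dual_indep_iff_exists', hE]
  simp only [subset_univ, true_and]
  constructor
  · rintro ⟨B, hB, hdisj⟩
    rw [hbase] at hB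
    obtain ⟨hGB, hBc, -⟩ := hB
    have hJG : J ⊆ Gᶜ := by
      intro x hx
      by_contra hxG
      simp only [mem_compl_iff, not_not] at hxG
      exact (Set.disjoint_left.1 hdisj hx) (hGB hxG)
    have hJsub : J ⊆ Gᶜ \ (B ∩ Gᶜ) := by
      intro x hx
      exact ⟨hJG hx, fun hxB => (Set.disjoint_left.1 hdisj hx) hxB.1⟩
    have h1 : (Gᶜ \ (B ∩ Gᶜ)).ncard = c - (c - 1) := by
      rw [Set.ncard_diff inter_subset_right (Set.toFinite _), hBc]
    have h2 : J.ncard ≤ c - (c - 1) := by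
      rw [← h1]; exact Set.ncard_le_ncard hJsub (Set.toFinite _)
    refine ⟨hJG, ?_⟩
    by_cases hc0 : c = 0
    · have : Gᶜ = ∅ := by
        rw [← Set.ncard_eq_zero (Set.toFinite _)]; omega
      rw [this, Set.subset_empty_iff] at hJG
      rw [hJG]; exact Set.subsingleton_empty
    · have : J.ncard ≤ 1 := by omega
      exact (Set.ncard_le_one (Set.toFinite _)).1 this
  · rintro ⟨hJG, hJsub⟩
    have hJ1 : J.ncard ≤ 1 := (Set.ncard_le_one (Set.toFinite _)).2 hJsub
    have hJc : J.ncard ≤ c := by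
      rw [hc]; exact Set.ncard_le_ncard hJG (Set.toFinite _)
    have hle : ((c - 1 : ℕ) : ℕ∞) ≤ (Gᶜ \ J).encard := by
      rw [encardNcardAux (Set.toFinite _)]
      have : (Gᶜ \ J).ncard = c - J.ncard := by
        rw [Set.ncard_diff hJG (Set.toFinite _)]
      rw [this]
      exact_mod_cast (by omega : c - 1 ≤ c - J.ncard)
    obtain ⟨B₂, hB₂sub, hB₂card⟩ := Set.exists_subset_encard_eq hle
    refine ⟨G ∪ B₂, ?_, ?_⟩
    · rw [hbase]
      have hB₂Gc : B₂ ⊆ Gᶜ := hB₂sub.trans diff_subset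
      refine ⟨subset_union_left, ?_, subset_univ _⟩
      have : (G ∪ B₂) ∩ Gᶜ = B₂ := by
        ext x
        simp only [mem_inter_iff, mem_union, mem_compl_iff]
        constructor
        · rintro ⟨hx | hx, hxc⟩
          · exact absurd hx hxc
          · exact hx
        · intro hx; exact ⟨Or.inr hx, hB₂Gc hx⟩
      rw [this]
      rw [encardNcardAux (Set.toFinite _)] at hB₂card
      exact_mod_cast hB₂card
    · rw [Set.disjoint_union_right]
      constructor
      · exact Set.disjoint_left.2 fun x hx => (hJG hx)
      · exact Set.disjoint_left.2 fun x hx hxB => (hB₂sub hxB).2 hx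

lemma foldAux : ∀ (l : List (Matroid α)) (s : ℕ → Set α),
    (∀ i : Fin l.length, (l.get i).E = univ ∧
      ∀ J, (l.get i)✶.Indep J ↔ J ⊆ s (i : ℕ) ∧ J.Subsingleton) →
    ∀ P, IsFoldInter l P → P.E = univ ∧ ∀ X, P✶.Indep X ↔ PTfAux s l.length X := by
  intro l
  induction l with
  | nil =>
    intro s _ P hP
    rw [show IsFoldInter [] P ↔ P = Matroid.freeOn Set.univ from Iff.rfl] at hP
    subst hP
    refine ⟨by simp, fun X => ?_⟩
    rw [Matroid.freeOn_dual_eq, Matroid.loopyOn_indep_iff]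
    constructor
    · rintro rfl
      exact ⟨fun x => absurd x.2 (Set.notMem_empty _), fun a => absurd a.2 (Set.notMem_empty _),
        fun x => absurd x.2 (Set.notMem_empty _)⟩
    · rintro ⟨f, -, -⟩
      ext x
      simp only [Set.mem_empty_iff_false, iff_false]
      intro hx
      exact (f ⟨x, hx⟩).elim0
  | cons M l ih =>
    intro s h P hP
    obtain ⟨Q, hQ, U, hU, rfl⟩ := hP
    have h0E : M.E = univ := by simpa using (h ⟨0, by simp⟩).1
    have h0I : ∀ J, M✶.Indep J ↔ J ⊆ s 0 ∧ J.Subsingleton := fun J => by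
      simpa using (h ⟨0, by simp⟩).2 J
    have hIH := ih (fun q => s (q + 1)) (fun i => by simpa using h i.succ) Q hQ
    have hUE : U.E = univ := by
      rw [hU.1, Matroid.dual_ground, h0E]
    have hPE : (U✶).E = univ := by rw [Matroid.dual_ground, hUE]
    simp only [List.length_cons]
    refine ⟨hPE, fun X => ?_⟩
    rw [Matroid.dual_dual, hU.2]
    constructor
    · rintro ⟨I, J, hI, hJ, rfl⟩
      rw [h0I] at hI
      obtain ⟨fJ, hfJinj, hfJmem⟩ := (hIH.2 J).1 hJ
      refine ⟨fun y => if hy : (y : α) ∈ J then (fJ ⟨y.1, hy⟩).succ else 0, ?_, ?_⟩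
      · intro a b hab
        by_cases hya : (a : α) ∈ J <;> by_cases hyb : (b : α) ∈ J
        · simp only [hya, hyb, dif_pos] at hab
          have h5 := hfJinj (Fin.succ_injective _ hab)
          have h6 : (a : α) = (b : α) := congrArg (fun z : J => (z : α)) h5
          exact Subtype.ext h6
        · simp only [hya, hyb, dif_pos, dif_neg, not_false_iff] at hab
          exact absurd hab (Fin.succ_ne_zero _)
        · simp only [hya, hyb, dif_pos, dif_neg, not_false_iff] at hab
          exact absurd hab.symm (Fin.succ_ne_zero _)
        · have ha' : (a : α) ∈ I := a.2.resolve_right hya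
          have hb' : (b : α) ∈ I := b.2.resolve_right hyb
          exact Subtype.ext (hI.2 ha' hb')
      · intro y
        by_cases hy : (y : α) ∈ J
        · simp only [hy, dif_pos]
          have := hfJmem ⟨y.1, hy⟩
          simpa [Fin.val_succ] using this
        · simp only [hy, dif_neg, not_false_iff]
          have hyI : (y : α) ∈ I := y.2.resolve_right hy
          exact hI.1 hyI
    · rintro ⟨f, hinj, hmem⟩
      set I : Set α := {x | ∃ hx : x ∈ X, f ⟨x, hx⟩ = 0} with hIdef
      set J : Set α := {x | ∃ hx : x ∈ X, f ⟨x, hx⟩ ≠ 0} with hJdef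
      refine ⟨I, J, ?_, ?_, ?_⟩
      · rw [h0I]
        constructor
        · rintro x ⟨hx, hfx⟩
          have := hmem ⟨x, hx⟩
          rw [hfx] at this
          exact this
        · rintro x ⟨hx, hfx⟩ y ⟨hy, hfy⟩
          have : f ⟨x, hx⟩ = f ⟨y, hy⟩ := by rw [hfx, hfy]
          have h5 := hinj this
          exact congrArg (fun z : X => (z : α)) h5
      · rw [hIH.2]
        refine ⟨fun j => (f ⟨j.1, j.2.choose⟩).pred j.2.choose_spec, ?_, ?_⟩
        · intro a b hab
          rw [Fin.pred_inj] at hab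
          have h5 := hinj hab
          have h6 : (a : α) = (b : α) := congrArg (fun z : X => (z : α)) h5
          exact Subtype.ext h6
        · intro j
          have hval : ((f ⟨j.1, j.2.choose⟩).pred j.2.choose_spec : ℕ) + 1
              = ((f ⟨j.1, j.2.choose⟩ : Fin (l.length + 1)) : ℕ) := by
            have hne : ((f ⟨j.1, j.2.choose⟩ : Fin (l.length + 1)) : ℕ) ≠ 0 := by
              intro hc
              exact j.2.choose_spec (Fin.ext hc)
            simp [Fin.coe_pred]
            omega
          show (j : α) ∈ s (((f ⟨j.1, j.2.choose⟩).pred j.2.choose_spec : ℕ) + 1)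
          rw [hval]
          exact hmem ⟨j.1, j.2.choose⟩
      · ext x
        simp only [Set.mem_union, hIdef, hJdef, Set.mem_setOf_eq]
        constructor
        · intro hx
          by_cases h : f ⟨x, hx⟩ = 0
          · exact Or.inl ⟨hx, h⟩
          · exact Or.inr ⟨hx, h⟩
        · rintro (⟨hx, -⟩ | ⟨hx, -⟩) <;> exact hx

end MatroidAuxChainProduct

/-- The transversal presentation of the chain product of the (0-indexed) chain
`G 0 ⊊ ⋯ ⊊ G (k-1)`: `|G 0|` copies of `G 0`, then `|G i \ G (i-1)| - 1` copies of `G i`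
for `i = 1, …, k-1`, then `|(G (k-1))ᶜ| - 1` copies of the ground set. -/
noncomputable def chainPresentation (k : ℕ) (G : ℕ → Set α) : List (Set α) :=
  List.replicate (G 0).ncard (G 0) ++
    ((List.range (k - 1)).flatMap fun i =>
      List.replicate ((G (i + 1) \ G i).ncard - 1) (G (i + 1))) ++
    List.replicate ((G (k - 1))ᶜ.ncard - 1) Set.univ

/-- The chain product `M_𝒢 = H_{G_1} ∧ ⋯ ∧ H_{G_k}` is the transversal matroid
`M[𝒜_𝒢]` with presentation `chainPresentation`. -/
theorem chainProduct_eq_transversal [Fintype α] {k : ℕ} (hk : 1 ≤ k) (G : ℕ → Set α)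
    (hchain : ∀ i j, i < j → j < k → G i ⊂ G j)
    (hsize : (G (k - 1)).ncard ≤ Fintype.card α - 2)
    (H : ℕ → Matroid α) (hH : ∀ i < k, IsHG (G i) (H i))
    (P : Matroid α) (hP : IsFoldInter (List.ofFn fun i : Fin k => H i) P) :
    P.E = Set.univ ∧
      ∀ X, P.Indep X ↔ IsPartialTransversal (chainPresentation k G) X := by
  classical
  by_cases hn0 : Fintype.card α = 0
  · -- degenerate case: empty ground type
    have hemp : IsEmpty α := Fintype.card_eq_zero_iff.1 hn0
    have hset : ∀ (A B : Set α), A = B := fun A B => by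
      ext x; exact (hemp.false x).elim
    refine ⟨hset _ _, fun X => ?_⟩
    have hX : X = ∅ := hset X ∅
    subst hX
    constructor
    · intro _
      exact ⟨fun x => absurd x.2 (Set.notMem_empty _),
        fun a => absurd a.2 (Set.notMem_empty _),
        fun x => absurd x.2 (Set.notMem_empty _)⟩
    · intro _
      exact P.empty_indep
  -- main case
  have hmonoG : ∀ i j, i ≤ j → j < k → G i ⊆ G j := by
    intro i j hij hj
    rcases eq_or_lt_of_le hij with rfl | hlt
    · exact Set.Subset.rfl
    · exact (hchain i j hlt hj).subset
  have hstep : ∀ d i, i + d < k → (G i).ncard + d ≤ (G (i + d)).ncard := by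
    intro d
    induction d with
    | zero => intro i _; simp
    | succ d ihd =>
      intro i hlt
      have h1 := ihd i (by omega)
      have h2 : (G (i + d)).ncard < (G (i + d + 1)).ncard :=
        Set.ncard_lt_ncard (hchain (i + d) (i + d + 1) (by omega) (by omega)) (Set.toFinite _)
      have h3 : i + (d + 1) = i + d + 1 := by omega
      rw [h3]
      omega
  have hnuniv : (Set.univ : Set α).ncard = Fintype.card α := by
    simp [Set.ncard_univ, Nat.card_eq_fintype_card]
  have hcompl : ∀ A : Set α, A.ncard + Aᶜ.ncard = Fintype.card α := fun A => by
    have h1 := Set.ncard_add_ncard_compl A (Set.toFinite _) (Set.toFinite _)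
    rw [Nat.card_eq_fintype_card] at h1
    exact h1
  have hgi : ∀ i < k, (G i).ncard + (k - 1 - i) ≤ (G (k - 1)).ncard := by
    intro i hi
    have h1 := hstep (k - 1 - i) i (by omega)
    have h2 : i + (k - 1 - i) = k - 1 := by omega
    rw [h2] at h1
    exact h1
  have hgn : (G (k - 1)).ncard + 1 ≤ Fintype.card α := by
    have := hsize
    omega
  have hkn : k ≤ Fintype.card α := by
    have h1 := hgi 0 (by omega)
    omega
  have hgii : ∀ i < k, i ≤ (G i).ncard := by
    intro i hi
    have := hstep i 0 (by omega)
    simpa using (by omega : i ≤ (G (0 + i)).ncard)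
  -- dual description of P
  have hfold := foldAux (List.ofFn fun i : Fin k => H ↑i) (fun q => (G q)ᶜ)
    (fun i => by
      have hik : ((Fin.cast List.length_ofFn i : Fin k) : ℕ) < k :=
        (Fin.cast List.length_ofFn i).2
      have hd := isHG_dualAux (hH _ hik)
      constructor
      · rw [List.get_ofFn]
        exact hd.1
      · intro J
        rw [List.get_ofFn]
        simpa using hd.2 J) P hP
  rw [List.length_ofFn] at hfold
  obtain ⟨hPE, hPdual⟩ := hfold
  have hanti : ∀ i j, i ≤ j → j < k → (G j)ᶜ ⊆ (G i)ᶜ := fun i j hij hj =>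
    Set.compl_subset_compl.2 (hmonoG i j hij hj)
  have hind_le : ∀ Y, P✶.Indep Y → Y.ncard ≤ k := fun Y hY => by
    obtain ⟨f, hf, -⟩ := (hPdual Y).1 hY
    exact ncardAux_le_of_inj f hf
  have hrange_ind : ∀ g' : Fin k → α, Function.Injective g' →
      (∀ i : Fin k, g' i ∈ (G (i : ℕ))ᶜ) →
      P✶.Indep (Set.range g') ∧ (Set.range g').ncard = k := by
    intro g' hginj hgmem
    constructor
    · rw [hPdual]
      refine ⟨fun b => b.2.choose, ?_, ?_⟩
      · intro a b hab
        have h0 : (a.2.choose : Fin k) = b.2.choose := hab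
        have h1 : (a : α) = (b : α) := by
          rw [← a.2.choose_spec, ← b.2.choose_spec, h0]
        exact Subtype.ext h1
      · intro b
        show (b : α) ∈ (G ((b.2.choose : Fin k) : ℕ))ᶜ
        exact Set.mem_of_eq_of_mem b.2.choose_spec.symm (hgmem b.2.choose)
    · rw [← Nat.card_coe_set_eq, Nat.card_range_of_injective hginj,
        Nat.card_eq_fintype_card, Fintype.card_fin]
  have hbase_of : ∀ B, P✶.Indep B → B.ncard = k → P✶.IsBase B := by
    intro B hB hcard
    rw [Matroid.isBase_iff_maximal_indep]
    refine ⟨hB, fun J hJ hBJ => ?_⟩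
    have h1 := hind_le J hJ
    have h2 : B = J := Set.eq_of_subset_of_ncard_le hBJ (by omega) (Set.toFinite _)
    exact h2.symm.subset
  have hglob : ∀ i < k, k ≤ ((G i)ᶜ).ncard + i := by
    intro i hi
    have h1 := hcompl (G i)
    have h2 := hgi i hi
    omega
  obtain ⟨g₀, hg₀inj, hg₀mem⟩ := sdrAux_backward k (fun q => (G q)ᶜ) hglob
  have hbase₀ : P✶.IsBase (Set.range g₀) :=
    hbase_of _ (hrange_ind g₀ hg₀inj hg₀mem).1 (hrange_ind g₀ hg₀inj hg₀mem).2
  -- the intersection characterization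
  have htrans : ∀ (X : Set α) (i : ℕ),
      (Xᶜ ∩ (G i)ᶜ).ncard + ((X \ G i).ncard + (G i).ncard) = Fintype.card α := by
    intro X i
    have h1 : Xᶜ ∩ (G i)ᶜ = (X ∪ G i)ᶜ := (Set.compl_union X (G i)).symm
    have h2 : (X ∪ G i).ncard = (X \ G i).ncard + (G i).ncard := by
      rw [← Set.diff_union_self,
        Set.ncard_union_eq Set.disjoint_sdiff_left (Set.toFinite _) (Set.toFinite _)]
    have h3 := hcompl (X ∪ G i)
    rw [h1]
    omega
  have hA : ∀ X : Set α, P.Indep X ↔ ∀ i < k, k ≤ (Xᶜ ∩ (G i)ᶜ).ncard + i := by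
    intro X
    have hPdd : P.Indep X ↔ (P✶)✶.Indep X := by rw [Matroid.dual_dual]
    rw [hPdd, Matroid.dual_indep_iff_exists', Matroid.dual_ground, hPE]
    simp only [Set.subset_univ, true_and]
    constructor
    · rintro ⟨B, hB, hdisj⟩
      have hBk : B.ncard = k := by
        have h1 := hB.ncard_eq_ncard_of_isBase hbase₀
        rw [h1, (hrange_ind g₀ hg₀inj hg₀mem).2]
      obtain ⟨f, hfinj, hfmem⟩ := (hPdual B).1 hB.indep
      have hfbij : Function.Bijective f := by
        rw [Nat.bijective_iff_injective_and_card]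
        refine ⟨hfinj, ?_⟩
        rw [Nat.card_coe_set_eq, hBk, Nat.card_eq_fintype_card, Fintype.card_fin]
      refine sdrAux_forward (t := fun q => Xᶜ ∩ (G q)ᶜ)
        (fun i j hij hj => Set.inter_subset_inter Set.Subset.rfl (hanti i j hij hj))
        (fun i => ((hfbij.2 i).choose : α)) ?_ ?_
      · intro a b hab
        have h1 : (hfbij.2 a).choose = (hfbij.2 b).choose := Subtype.ext hab
        rw [← (hfbij.2 a).choose_spec, ← (hfbij.2 b).choose_spec, h1]
      · intro i
        refine ⟨?_, ?_⟩
        · have hmem := ((hfbij.2 i).choose : B).2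
          exact fun hxX => (Set.disjoint_left.1 hdisj hxX) hmem
        · have h1 := hfmem (hfbij.2 i).choose
          rw [(hfbij.2 i).choose_spec] at h1
          exact h1
    · intro hC
      obtain ⟨g', hg'inj, hg'mem⟩ := sdrAux_backward k (fun q => Xᶜ ∩ (G q)ᶜ) hC
      refine ⟨Set.range g',
        hbase_of _ (hrange_ind g' hg'inj (fun i => (hg'mem i).2)).1
          (hrange_ind g' hg'inj (fun i => (hg'mem i).2)).2, ?_⟩
      rw [Set.disjoint_right]
      rintro b ⟨i, rfl⟩
      exact (hg'mem i).1
  -- the presentation side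
  have hdiffcard : ∀ i, i + 1 < k → (G (i + 1) \ G i).ncard = (G (i + 1)).ncard - (G i).ncard := by
    intro i hi
    rw [Set.ncard_diff (hmonoG i (i + 1) (by omega) hi) (Set.toFinite _)]
  have hPlen : ∀ m, m < k →
      ((List.range m).flatMap fun i =>
          List.replicate ((G (i + 1) \ G i).ncard - 1) (G (i + 1))).length
        + (G 0).ncard + m = (G m).ncard := by
    intro m
    induction m with
    | zero => intro _; simp
    | succ m ihm =>
      intro hm
      rw [List.range_succ, List.flatMap_append]
      simp only [List.flatMap_cons, List.flatMap_nil, List.append_nil, List.length_append,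
        List.length_replicate]
      have h1 := ihm (by omega)
      have h2 := hdiffcard m hm
      have h3 : (G m).ncard < (G (m + 1)).ncard :=
        Set.ncard_lt_ncard (hchain m (m + 1) (by omega) hm) (Set.toFinite _)
      omega
  set L := chainPresentation k G with hLdef
  have hlast : ((G (k - 1))ᶜ).ncard = Fintype.card α - (G (k - 1)).ncard := by
    have := hcompl (G (k - 1))
    omega
  obtain ⟨LA, hLA⟩ : ∃ LA, List.replicate (G 0).ncard (G 0) = LA := ⟨_, rfl⟩
  obtain ⟨LB, hLB⟩ : ∃ LB, (List.range (k - 1)).flatMap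
    (fun i => List.replicate ((G (i + 1) \ G i).ncard - 1) (G (i + 1))) = LB := ⟨_, rfl⟩
  obtain ⟨LC, hLC⟩ : ∃ LC, List.replicate (((G (k - 1))ᶜ).ncard - 1) Set.univ = LC := ⟨_, rfl⟩
  have hLparts : L = (LA ++ LB) ++ LC := by
    rw [hLdef, chainPresentation, hLA, hLB, hLC]
  have hLAlen : LA.length = (G 0).ncard := by rw [← hLA, List.length_replicate]
  have hLClen : LC.length = ((G (k - 1))ᶜ).ncard - 1 := by rw [← hLC, List.length_replicate]
  have hLBlen : LB.length + (G 0).ncard + (k - 1) = (G (k - 1)).ncard := by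
    rw [← hLB]; exact hPlen (k - 1) (by omega)
  have hlenL : L.length + k = Fintype.card α := by
    rw [hLparts]
    simp only [List.length_append]
    omega
  have hL2 : ∀ q, q < L.length →
      (∃ i, i < k ∧ q + i < (G i).ncard ∧ G i ⊆ L.getD q ∅ ∧
        (∀ i', i' < k → q + i' < (G i').ncard → L.getD q ∅ ⊆ G i')) ∨
      (L.getD q ∅ = Set.univ ∧ ∀ i, i < k → (G i).ncard ≤ q + i) := by
    intro q hq
    rw [hLparts] at hq ⊢
    simp only [List.length_append] at hq
    by_cases hq0 : q < (G 0).ncard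
    · left
      have hgd : ((LA ++ LB) ++ LC).getD q ∅ = G 0 := by
        rw [List.getD_append _ _ _ _ (by rw [List.length_append]; omega),
          List.getD_append _ _ _ _ (by omega),
          ← hLA, List.getD_eq_getElem _ _ (by rw [List.length_replicate]; omega),
          List.getElem_replicate]
      rw [hgd]
      refine ⟨0, by omega, by omega, Set.Subset.rfl, ?_⟩
      intro i' hi' _
      exact hmonoG 0 i' (by omega) hi'
    · push_neg at hq0
      by_cases hq1 : q < (G 0).ncard + LB.length
      · left
        have hq' : q - LA.length < LB.length := by omega
        obtain ⟨i, hik1, h2, h3, h4⟩ := blockGetDAux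
          (fun i => List.replicate ((G (i + 1) \ G i).ncard - 1) (G (i + 1))) (k - 1)
          (q - LA.length) (by rw [hLB]; exact hq')
        rw [hLB] at h4
        have hlen3 : ((List.range (i + 1)).flatMap fun i =>
            List.replicate ((G (i + 1) \ G i).ncard - 1) (G (i + 1))).length
            = ((List.range i).flatMap fun i =>
              List.replicate ((G (i + 1) \ G i).ncard - 1) (G (i + 1))).length
              + ((G (i + 1) \ G i).ncard - 1) := by
          rw [List.range_succ, List.flatMap_append]
          simp [List.length_append]
        have h2' : ((List.range i).flatMap (fun i =>
            List.replicate ((G (i + 1) \ G i).ncard - 1) (G (i + 1)))).length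
            ≤ q - LA.length := h2
        have h3' : q - LA.length < ((List.range (i + 1)).flatMap (fun i =>
            List.replicate ((G (i + 1) \ G i).ncard - 1) (G (i + 1)))).length := h3
        generalize hPig : ((List.range i).flatMap (fun i =>
            List.replicate ((G (i + 1) \ G i).ncard - 1) (G (i + 1)))).length = Pi
            at h2' hlen3
        generalize hPi1g : ((List.range (i + 1)).flatMap (fun i =>
            List.replicate ((G (i + 1) \ G i).ncard - 1) (G (i + 1)))).length = Pi1
            at h3' hlen3
        have hidx : q - LA.length - Pi
            < (List.replicate ((G (i + 1) \ G i).ncard - 1) (G (i + 1))).length := by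
          rw [List.length_replicate]
          omega
        have e1 : ((LA ++ LB) ++ LC).getD q ∅ = (LA ++ LB).getD q ∅ :=
          List.getD_append _ _ _ _ (by rw [List.length_append]; omega)
        have e2 : (LA ++ LB).getD q ∅ = LB.getD (q - LA.length) ∅ :=
          List.getD_append_right _ _ _ _ (by omega)
        rw [hPig] at h4
        have e3 : (List.replicate ((G (i + 1) \ G i).ncard - 1) (G (i + 1))).getD
            (q - LA.length - Pi) ∅ = G (i + 1) := by
          rw [List.getD_eq_getElem _ _ hidx, List.getElem_replicate]
        have hgd : ((LA ++ LB) ++ LC).getD q ∅ = G (i + 1) :=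
          ((e1.trans e2).trans h4).trans e3
        rw [hgd]
        have hPi := hPlen i (by omega)
        have hPi1 := hPlen (i + 1) (by omega)
        rw [hPig] at hPi
        rw [hPi1g] at hPi1
        have hdc := hdiffcard i (by omega)
        have hmlt : (G i).ncard < (G (i + 1)).ncard :=
          Set.ncard_lt_ncard (hchain i (i + 1) (by omega) (by omega)) (Set.toFinite _)
        refine ⟨i + 1, by omega, by omega, Set.Subset.rfl, ?_⟩
        intro i' hi' hqi'
        rcases le_or_gt (i + 1) i' with hle | hlt
        · exact hmonoG (i + 1) i' hle hi'
        · exfalso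
          have hstep' := hstep (i - i') i' (by omega)
          have heq : i' + (i - i') = i := by omega
          rw [heq] at hstep'
          omega
      · right
        push_neg at hq1
        have hgd : ((LA ++ LB) ++ LC).getD q ∅ = Set.univ := by
          rw [List.getD_append_right _ _ _ _ (by rw [List.length_append]; omega),
            ← hLC, List.getD_eq_getElem _ _ (by rw [List.length_replicate, List.length_append]; omega),
            List.getElem_replicate]
        rw [hgd]
        refine ⟨rfl, ?_⟩
        intro i hik
        have hstep' := hstep (k - 1 - i) i (by omega)
        have heq : i + (k - 1 - i) = k - 1 := by omega
        rw [heq] at hstep'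
        omega
  have hsorted : ∀ p q, p ≤ q → q < L.length → L.getD p ∅ ⊆ L.getD q ∅ := by
    intro p q hpq hqlen
    rcases hL2 q hqlen with ⟨i, hik, hqi, hGi, -⟩ | ⟨hu, -⟩
    · rcases hL2 p (by omega) with ⟨ip, hipk, hpi, -, hupper⟩ | ⟨-, hlow⟩
      · exact (hupper i hik (by omega)).trans hGi
      · exact absurd (hlow i hik) (by omega)
    · rw [hu]
      exact Set.subset_univ _
  have hB : ∀ X : Set α,
      IsPartialTransversal L X ↔ ∀ i < k, k ≤ (Xᶜ ∩ (G i)ᶜ).ncard + i := by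
    intro X
    have hPTf : IsPartialTransversal L X ↔ PTfAux (fun q => L.getD q ∅) L.length X := by
      constructor
      · rintro ⟨f, hfinj, hfmem⟩
        refine ⟨f, hfinj, fun x => ?_⟩
        have h1 := hfmem x
        show (x : α) ∈ L.getD (↑(f x)) ∅
        rw [List.getD_eq_getElem _ _ (f x).2]
        simpa [List.get_eq_getElem] using h1
      · rintro ⟨f, hfinj, hfmem⟩
        refine ⟨f, hfinj, fun x => ?_⟩
        have h1 : (x : α) ∈ L.getD (↑(f x)) ∅ := hfmem x
        rw [List.getD_eq_getElem _ _ (f x).2] at h1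
        simpa [List.get_eq_getElem] using h1
    rw [hPTf]
    constructor
    · intro hpt
      have hcond := ptfAux_forward hsorted hpt
      intro i hik
      have htr := htrans X i
      have hii := hgii i hik
      by_cases hei : (G i).ncard ≤ i
      · have h1 : (X \ G i).ncard ≤ X.ncard := Set.ncard_le_ncard Set.diff_subset (Set.toFinite _)
        have h2 := hcond.1
        omega
      · push_neg at hei
        have hqlen : (G i).ncard - i - 1 < L.length := by
          have := hgi i hik
          omega
        rcases hL2 ((G i).ncard - i - 1) hqlen with ⟨i₀, hi₀k, hqi₀, hGi₀, hupper⟩ | ⟨-, hlow⟩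
        · have hsub := hupper i hik (by omega)
          have h2 := hcond.2 _ hqlen
          have h3 : (X \ G i).ncard ≤ (X \ L.getD ((G i).ncard - i - 1) ∅).ncard :=
            Set.ncard_le_ncard (Set.diff_subset_diff_right hsub) (Set.toFinite _)
          omega
        · exact absurd (hlow i hik) (by omega)
    · intro hC
      apply ptfAux_backward L.length (fun q => L.getD q ∅) X hsorted
      · have h0 := hC 0 (by omega)
        have htr := htrans X 0
        have h1 : X.ncard ≤ (X \ G 0).ncard + (G 0).ncard := by
          calc X.ncard ≤ ((X \ G 0) ∪ G 0).ncard := by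
                refine Set.ncard_le_ncard (fun x hx => ?_) (Set.toFinite _)
                by_cases hxg : x ∈ G 0
                · exact Or.inr hxg
                · exact Or.inl ⟨hx, hxg⟩
            _ ≤ (X \ G 0).ncard + (G 0).ncard := Set.ncard_union_le _ _
        omega
      · intro q hqlen
        rcases hL2 q hqlen with ⟨i, hik, hqi, hGi, -⟩ | ⟨hu, -⟩
        · have h2 := hC i hik
          have htr := htrans X i
          have hii := hgii i hik
          have h3 : (X \ L.getD q ∅).ncard ≤ (X \ G i).ncard :=
            Set.ncard_le_ncard (Set.diff_subset_diff_right hGi) (Set.toFinite _)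
          omega
        · rw [hu, Set.diff_univ, Set.ncard_empty]
          omega
  exact ⟨hPE, fun X => (hA X).trans (hB X).symm⟩
end

section
/- Let M be a matroid of rank at least 2 on finite ground set E and H_G a corank-one matroid (with coloop set G) such that M ∧ H_G is loopfree. Let F be a nonempty set that is a flat of both M and M ∧ H_G. Then rank_{M∧H_G}(F) = rank_M(F) − 1 if F ∪ G = E, and rank_{M∧H_G}(F) = rank_M(F) otherwise. -/
open Matroid Set
open scoped Classical

variable {α : Type*}

section AuxRank

namespace Matroid

variable {M : Matroid α} {I J X : Set α}

lemma le_eRk' (hI : M.Indep I) (hIX : I ⊆ X) : I.encard ≤ M.eRk' X :=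
  le_iSup₂_of_le I ⟨hI, hIX⟩ le_rfl

lemma eRk'_le {c : ℕ∞} (h : ∀ I, M.Indep I → I ⊆ X → I.encard ≤ c) : M.eRk' X ≤ c :=
  iSup₂_le fun I hI => h I hI.1 hI.2

lemma eRk'_basis (hI : M.IsBasis I X) : M.eRk' X = I.encard := by
  refine le_antisymm (eRk'_le fun J hJ hJX => ?_) (le_eRk' hI.indep hI.subset)
  obtain ⟨J', hJ', hsub⟩ := hJ.subset_isBasis_of_subset hJX hI.subset_ground
  exact (encard_mono hsub).trans (hJ'.encard_eq_encard hI).le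

lemma eRk'_ne_top [Fintype α] : M.eRk' X ≠ ⊤ :=
  ((eRk'_le fun I _ _ => encard_mono (subset_univ I)).trans_lt
    (Set.toFinite _).encard_lt_top).ne

lemma dual_rk [Fintype α] (N : Matroid α) {X : Set α} (hX : X ⊆ N.E) :
    N✶.eRk' X + N.eRk' N.E = X.encard + N.eRk' (N.E \ X) := by
  obtain ⟨I, hI⟩ := N.exists_isBasis (N.E \ X) diff_subset
  obtain ⟨B, hB, hIB⟩ := hI.indep.exists_isBase_superset
  obtain ⟨J, hJ⟩ := N✶.exists_isBasis X (by rwa [dual_ground])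
  rw [eRk'_basis hJ, eRk'_basis hI, eRk'_basis (isBasis_ground_iff.mpr hB)]
  have hBd : B ∩ (N.E \ X) = I :=
    (hI.eq_of_subset_indep (hB.indep.subset inter_subset_left)
      (subset_inter hIB hI.subset) inter_subset_right).symm
  have hBsplit : (B ∩ X).encard + I.encard = B.encard := by
    rw [← hBd, ← encard_union_eq
        (disjoint_sdiff_self_right.mono inter_subset_right inter_subset_right),
      ← inter_union_distrib_left, union_diff_self, union_eq_self_of_subset_left hX,
      inter_eq_self_of_subset_left hB.subset_ground]
  refine le_antisymm ?_ ?_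
  · obtain ⟨B', hB', hdisj⟩ := (dual_indep_iff_exists'.mp hJ.indep).2
    have hB'split : (B' ∩ X).encard + (B' ∩ (N.E \ X)).encard = B'.encard := by
      rw [← encard_union_eq
          (disjoint_sdiff_self_right.mono inter_subset_right inter_subset_right),
        ← inter_union_distrib_left, union_diff_self, union_eq_self_of_subset_left hX,
        inter_eq_self_of_subset_left hB'.subset_ground]
    calc J.encard + B.encard
        = J.encard + ((B' ∩ X).encard + (B' ∩ (N.E \ X)).encard) := by
          rw [hB'split, hB.encard_eq_encard_of_isBase hB']
      _ = (J.encard + (B' ∩ X).encard) + (B' ∩ (N.E \ X)).encard := (add_assoc _ _ _).symm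
      _ ≤ X.encard + I.encard := by
          refine add_le_add ?_ ?_
          · rw [← encard_union_eq (hdisj.mono_right inter_subset_left)]
            exact encard_mono (union_subset hJ.subset inter_subset_right)
          · obtain ⟨I', hI', hsub⟩ := (hB'.indep.subset inter_subset_left).subset_isBasis_of_subset
              inter_subset_right diff_subset
            exact (encard_mono hsub).trans (hI'.encard_eq_encard hI).le
  · have hind : N✶.Indep (X \ B) :=
      (dual_indep_iff_exists (diff_subset.trans hX)).mpr ⟨B, hB, disjoint_sdiff_left⟩
    have hXB : (X \ B).encard ≤ J.encard := by
      obtain ⟨J', hJ', hsub⟩ := hind.subset_isBasis_of_subset diff_subset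
        (show X ⊆ N✶.E by rwa [dual_ground])
      exact (encard_mono hsub).trans (hJ'.encard_eq_encard hJ).le
    calc X.encard + I.encard
        = ((X \ B).encard + (X ∩ B).encard) + I.encard := by rw [encard_diff_add_encard_inter]
      _ = (X \ B).encard + ((B ∩ X).encard + I.encard) := by rw [add_assoc, inter_comm]
      _ = (X \ B).encard + B.encard := by rw [hBsplit]
      _ ≤ J.encard + B.encard := add_le_add hXB le_rfl

lemma flat_insert_rk [Fintype α] {F : Set α} {e : α} (hF : M.IsFlat F)
    (he : e ∈ M.E) (heF : e ∉ F) : M.eRk' (insert e F) = M.eRk' F + 1 := by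
  obtain ⟨I, hI⟩ := M.exists_isBasis F hF.subset_ground
  have heI : e ∉ I := fun h => heF (hI.subset h)
  have hins : M.Indep (insert e I) := by
    rw [hI.indep.insert_indep_iff_of_notMem heI]
    refine ⟨he, fun hcl => heF ?_⟩
    rwa [hI.closure_eq_closure, hF.closure] at hcl
  refine le_antisymm (eRk'_le fun K hK hKX => ?_) ?_
  · have hsub : K \ {e} ⊆ F := by
      intro x hx
      rcases hKX hx.1 with rfl | h
      · exact absurd (mem_singleton x) hx.2
      · exact h
    have h1 : (K \ {e}).encard ≤ M.eRk' F := le_eRk' (hK.subset diff_subset) hsub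
    calc K.encard ≤ (insert e (K \ {e})).encard := encard_mono (subset_insert_diff_singleton e K)
      _ ≤ (K \ {e}).encard + 1 := encard_insert_le _ _
      _ ≤ M.eRk' F + 1 := add_le_add h1 le_rfl
  · have h := le_eRk' hins (insert_subset_insert hI.subset)
    rwa [encard_insert_of_notMem heI, ← eRk'_basis hI] at h

end Matroid

lemma HG_dual_indep [Fintype α] {G : Set α} {H : Matroid α} (hH : IsHG G H)
    (hGc : Gᶜ.Nonempty) (J : Set α) : H✶.Indep J ↔ J ⊆ Gᶜ ∧ J.encard ≤ 1 := by
  obtain ⟨U', hd, ⟨hU'E, hU'B⟩, rfl⟩ := hH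
  have hGcn : 1 ≤ Gᶜ.ncard := (Set.ncard_pos (Set.toFinite _)).mpr hGc
  have hn : ((Gᶜ.ncard : ℕ∞)) = Gᶜ.encard := by
    rw [Set.ncard_def]; exact ENat.coe_toNat (Set.toFinite _).encard_lt_top.ne
  have hsum : ((Gᶜ.ncard - 1 : ℕ) : ℕ∞) + 1 = (Gᶜ.ncard : ℕ∞) := by
    have h : Gᶜ.ncard - 1 + 1 = Gᶜ.ncard := by omega
    exact_mod_cast h
  constructor
  · intro hJ
    obtain ⟨hJE, B, hB, hdisj⟩ := dual_indep_iff_exists'.mp hJ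
    rw [disjointSum_isBase_iff] at hB
    simp only [Matroid.freeOn_ground, hU'E, Matroid.freeOn_isBase_iff] at hB
    obtain ⟨hB1, hB2, -⟩ := hB
    have hGB : G ⊆ B := by rw [← inter_eq_right]; exact hB1
    obtain ⟨hBGc, hBcard⟩ := (hU'B _).mp hB2
    have hJGc : J ⊆ Gᶜ := fun x hx (hxG : x ∈ G) => disjoint_left.mp hdisj hx (hGB hxG)
    have hsub : J ⊆ Gᶜ \ B := subset_diff.mpr ⟨hJGc, hdisj⟩
    have h1 : (Gᶜ \ B).encard = 1 := by
      have h := Set.encard_diff_add_encard_inter Gᶜ B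
      rw [Set.inter_comm, hBcard, ← hn, ← hsum,
        add_comm (((Gᶜ.ncard - 1 : ℕ) : ℕ∞)) 1] at h
      exact WithTop.add_right_cancel (ENat.coe_ne_top _) h
    exact ⟨hJGc, h1 ▸ encard_mono hsub⟩
  · rintro ⟨hJGc, hJ1⟩
    have hex : ∃ e, e ∈ Gᶜ ∧ J ⊆ {e} := by
      obtain (rfl | ⟨e, rfl⟩) := Set.encard_le_one_iff_eq.mp hJ1
      · exact ⟨hGc.choose, hGc.choose_spec, empty_subset _⟩
      · exact ⟨e, hJGc (mem_singleton e), Subset.rfl⟩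
    obtain ⟨e, heGc, hJe⟩ := hex
    refine dual_indep_iff_exists'.mpr ⟨?_, G ∪ (Gᶜ \ {e}), ?_, ?_⟩
    · have hE : ((Matroid.freeOn G).disjointSum U' hd).E = G ∪ Gᶜ := by
        simp [hU'E]
      rw [hE]
      exact hJGc.trans subset_union_right
    · rw [disjointSum_isBase_iff]
      simp only [Matroid.freeOn_ground, hU'E, Matroid.freeOn_isBase_iff]
      refine ⟨?_, ?_, ?_⟩
      · ext x
        simp only [mem_inter_iff, mem_union, mem_diff, mem_compl_iff, mem_singleton_iff]
        tauto
      · have hBset : (G ∪ (Gᶜ \ {e})) ∩ Gᶜ = Gᶜ \ {e} := by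
          ext x
          simp only [mem_inter_iff, mem_union, mem_diff, mem_compl_iff, mem_singleton_iff]
          tauto
        rw [hBset, hU'B]
        refine ⟨diff_subset, ?_⟩
        have h := Set.encard_diff_singleton_add_one heGc
        rw [← hn, ← hsum] at h
        exact WithTop.add_right_cancel WithTop.one_ne_top h
      · exact union_subset_union_right _ diff_subset
    · refine disjoint_left.mpr fun x hxJ hxB => ?_
      have hxe : x = e := hJe hxJ
      subst hxe
      rcases hxB with h | h
      · exact heGc h
      · exact h.2 (mem_singleton x)

end AuxRank

/-- Let `M` be a matroid of rank at least `2` and `H_G` a corank-one matroid such that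
`M ∧ H_G` is loopfree. If `F ≠ ∅` is a flat of both `M` and `M ∧ H_G`, then
`rank_{M ∧ H_G}(F) = rank_M(F) - 1` if `F ∪ G = E`, and `rank_{M ∧ H_G}(F) = rank_M(F)`
otherwise. -/
theorem matroidInter_HG_rank_flat [Fintype α] (M H P : Matroid α) (G : Set α)
    (hME : M.E = Set.univ) (hMr : (2 : ℕ∞) ≤ M.rk')
    (hG : G.ncard ≤ Fintype.card α - 2) (hH : IsHG G H)
    (hP : IsMatroidInter M H P) (hPl : P.Loopless')
    (F : Set α) (hFne : F.Nonempty) (hFM : M.IsFlat F) (hFP : P.IsFlat F) :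
    (F ∪ G = Set.univ → P.eRk' F + 1 = M.eRk' F) ∧
      (F ∪ G ≠ Set.univ → P.eRk' F = M.eRk' F) := by
  obtain ⟨U, hU, rfl⟩ := hP
  have hME' : M✶.E = Set.univ := by rw [dual_ground, hME]
  have hUE : U.E = Set.univ := hU.1.trans hME'
  have hcard : 0 < Fintype.card α := Fintype.card_pos_iff.mpr ⟨hFne.some⟩
  have hGc : Gᶜ.Nonempty := by
    rw [Set.nonempty_compl]
    intro h
    subst h
    rw [Set.ncard_univ, Nat.card_eq_fintype_card] at hG
    omega
  have hHdual := HG_dual_indep hH hGc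
  have hU2 : ∀ K, U.Indep K ↔ ∃ I J, M✶.Indep I ∧ (J ⊆ Gᶜ ∧ J.encard ≤ 1) ∧ K = I ∪ J := by
    intro K
    rw [hU.2 K]
    constructor
    · rintro ⟨I, J, h1, h2, h3⟩; exact ⟨I, J, h1, (hHdual J).mp h2, h3⟩
    · rintro ⟨I, J, h1, h2, h3⟩; exact ⟨I, J, h1, (hHdual J).mpr h2, h3⟩
  have hUle : ∀ X : Set α, U.eRk' X ≤ M✶.eRk' X + 1 := by
    intro X
    refine Matroid.eRk'_le fun K hK hKX => ?_
    obtain ⟨I, J, hI, ⟨hJGc, hJ1⟩, rfl⟩ := (hU2 _).mp hK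
    calc (I ∪ J).encard ≤ I.encard + J.encard := encard_union_le _ _
      _ ≤ M✶.eRk' X + 1 := add_le_add (Matroid.le_eRk' hI (subset_union_left.trans hKX)) hJ1
  have hMU : ∀ I, M✶.Indep I → U.Indep I := fun I hI =>
    (hU2 I).mpr ⟨I, ∅, hI, ⟨empty_subset _, by simp⟩, (union_empty I).symm⟩
  have hMUe : ∀ I e, M✶.Indep I → e ∈ Gᶜ → U.Indep (insert e I) := fun I e hI he =>
    (hU2 _).mpr ⟨I, {e}, hI, ⟨singleton_subset_iff.mpr he, by simp⟩, (union_singleton).symm⟩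
  have hrUuniv : U.eRk' Set.univ = M✶.eRk' Set.univ + 1 := by
    refine le_antisymm (hUle Set.univ) ?_
    by_cases hexists : ∃ B₀ e, M✶.IsBase B₀ ∧ e ∈ Gᶜ ∧ e ∉ B₀
    · obtain ⟨B₀, e, hB₀, heGc, heB₀⟩ := hexists
      have h := Matroid.le_eRk' (hMUe B₀ e hB₀.indep heGc) (subset_univ _)
      rw [encard_insert_of_notMem heB₀] at h
      conv_lhs => rw [← hME', Matroid.eRk'_basis (isBasis_ground_iff.mpr hB₀)]
      exact h
    · exfalso
      push_neg at hexists
      obtain ⟨e, heGc⟩ := hGc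
      have hPe := hPl e (by rw [dual_ground, hUE]; trivial)
      obtain ⟨-, B, hB, hdis⟩ := dual_indep_iff_exists'.mp hPe
      have heB : e ∉ B := fun h => disjoint_left.mp hdis (mem_singleton e) h
      obtain ⟨I, J, hI, ⟨hJGc, hJ1⟩, hBe⟩ := (hU2 B).mp hB.indep
      have hIJ : M✶.Indep (I ∪ J) := by
        obtain ⟨B₀, hB₀, hIB₀⟩ := hI.exists_isBase_superset
        exact hB₀.indep.subset (union_subset hIB₀ fun x hxJ => hexists B₀ x hB₀ (hJGc hxJ))
      rw [← hBe] at hIJ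
      have hins := hMUe _ e hIJ heGc
      exact (hB.insert_dep ⟨by rw [hUE]; trivial, heB⟩).not_indep hins
  have hPF := Matroid.dual_rk U (show F ⊆ U.E by rw [hUE]; exact subset_univ F)
  rw [hUE, ← compl_eq_univ_diff] at hPF
  have hMF := Matroid.dual_rk M✶ (show F ⊆ M✶.E by rw [hME']; exact subset_univ F)
  rw [dual_dual, hME', ← compl_eq_univ_diff] at hMF
  constructor
  · intro h
    have hFG : Fᶜ ⊆ G := compl_subset_iff_union.mpr h
    have hU1 : U.eRk' Fᶜ = M✶.eRk' Fᶜ := by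
      refine le_antisymm (Matroid.eRk'_le fun K hK hKX => ?_)
        (Matroid.eRk'_le fun I hI hIX => Matroid.le_eRk' (hMU I hI) hIX)
      obtain ⟨I, J, hI, ⟨hJGc, hJ1⟩, rfl⟩ := (hU2 _).mp hK
      have hJ : J = ∅ := by
        ext x
        simp only [mem_empty_iff_false, iff_false]
        intro hx
        exact (hJGc hx) (hFG (hKX (mem_union_right _ hx)))
      rw [hJ, union_empty]
      exact Matroid.le_eRk' hI (subset_union_left.trans hKX)
    have h3 : (U✶.eRk' F + 1) + M✶.eRk' Set.univ = M.eRk' F + M✶.eRk' Set.univ := by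
      calc (U✶.eRk' F + 1) + M✶.eRk' Set.univ
          = U✶.eRk' F + (M✶.eRk' Set.univ + 1) := by
            rw [add_assoc, add_comm 1 (M✶.eRk' Set.univ)]
        _ = U✶.eRk' F + U.eRk' Set.univ := by rw [hrUuniv]
        _ = F.encard + U.eRk' Fᶜ := hPF
        _ = F.encard + M✶.eRk' Fᶜ := by rw [hU1]
        _ = M.eRk' F + M✶.eRk' Set.univ := hMF.symm
    exact WithTop.add_right_cancel Matroid.eRk'_ne_top h3
  · intro h
    obtain ⟨e, he⟩ := (ne_univ_iff_exists_notMem _).mp h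
    have heF : e ∉ F := fun hx => he (mem_union_left _ hx)
    have heG : e ∉ G := fun hx => he (mem_union_right _ hx)
    have heFc : e ∈ Fᶜ := heF
    have heGc : e ∈ Gᶜ := heG
    have h1 := Matroid.dual_rk M (show Fᶜ ⊆ M.E by rw [hME]; exact subset_univ _)
    have h2 := Matroid.dual_rk M
      (show Fᶜ \ {e} ⊆ M.E by rw [hME]; exact diff_subset.trans (subset_univ _))
    rw [hME, ← compl_eq_univ_diff, compl_compl] at h1
    have e2 : Set.univ \ (Fᶜ \ {e}) = insert e F := by
      rw [← compl_eq_univ_diff, diff_eq, compl_inter, compl_compl, compl_compl, union_singleton]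
    rw [hME, e2, Matroid.flat_insert_rk hFM (by rw [hME]; trivial) heF] at h2
    have hcanc : M✶.eRk' (Fᶜ \ {e}) = M✶.eRk' Fᶜ := by
      have hre : (Fᶜ \ {e}).encard + (M.eRk' F + 1) = ((Fᶜ \ {e}).encard + 1) + M.eRk' F := by
        rw [← add_assoc, add_right_comm]
      rw [encard_diff_singleton_add_one heFc] at hre
      exact WithTop.add_right_cancel Matroid.eRk'_ne_top (h2.trans (hre.trans h1.symm))
    have hU1 : U.eRk' Fᶜ = M✶.eRk' Fᶜ + 1 := by
      refine le_antisymm (hUle Fᶜ) ?_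
      obtain ⟨I, hI⟩ := M✶.exists_isBasis (Fᶜ \ {e})
        (show Fᶜ \ {e} ⊆ M✶.E by rw [hME']; exact subset_univ _)
      have hIe : e ∉ I := fun hx => (hI.subset hx).2 (mem_singleton e)
      have hle := Matroid.le_eRk' (hMUe I e hI.indep heGc)
        (insert_subset heFc (hI.subset.trans diff_subset))
      rwa [encard_insert_of_notMem hIe, ← Matroid.eRk'_basis hI, hcanc] at hle
    have h3 : U✶.eRk' F + (M✶.eRk' Set.univ + 1) = M.eRk' F + (M✶.eRk' Set.univ + 1) := by
      calc U✶.eRk' F + (M✶.eRk' Set.univ + 1)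
          = U✶.eRk' F + U.eRk' Set.univ := by rw [hrUuniv]
        _ = F.encard + U.eRk' Fᶜ := hPF
        _ = F.encard + (M✶.eRk' Fᶜ + 1) := by rw [hU1]
        _ = (F.encard + M✶.eRk' Fᶜ) + 1 := (add_assoc _ _ _).symm
        _ = (M.eRk' F + M✶.eRk' Set.univ) + 1 := by rw [hMF]
        _ = M.eRk' F + (M✶.eRk' Set.univ + 1) := add_assoc _ _ _
    exact WithTop.add_right_cancel
      (WithTop.add_ne_top.mpr ⟨Matroid.eRk'_ne_top, WithTop.one_ne_top⟩) h3
end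

section
/- Define numbers N_{r,n} by N_{1,m} = 1 for m ≥ 0, N_{r,n} = 0 when r > n ≥ 1 or r ≤ 0 or n < 0 (except N_{1,0}=1), and the recursion N_{r,n} = ∑_{k≥1} ∑_{s≥k+1} C(n,s) N_{r−k,n−s} for r > 1. Then the exponential generating function ∑_{n≥0} ∑_{r≥0} N_{r+1,n} x^r t^n / n! equals (x−1)/(x − e^{(x−1)t}). -/
open scoped Classical
open Finset

/-- Let `N_{r,n}` satisfy `N_{1,m} = 1` for all `m ≥ 0`, `N_{r,n} = 0` whenever
`(r,n)` is not of the form `1 ≤ r ≤ n` (except `N_{1,0} = 1`), and the recursion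
`N_{r,n} = ∑_{k ≥ 1} ∑_{s ≥ k+1} C(n,s) N_{r-k,n-s}` for `r > 1`. Then the exponential
generating function `∑_{n,r} N_{r+1,n} x^r t^n / n!` equals `(x-1)/(x - e^{(x-1)t})`,
i.e. (clearing the denominator, as power series in `t` over the field `ℚ(x)`)
`(∑_n (∑_r N_{r+1,n} x^r) t^n / n!) ⬝ (x - e^{(x-1)t}) = x - 1`. -/
theorem nested_generating_function (N : ℕ → ℕ → ℕ)
    (hN1 : ∀ m, N 1 m = 1)
    (hN0 : ∀ r n, ¬(1 ≤ r ∧ r ≤ n ∧ 1 ≤ n) → ¬(r = 1 ∧ n = 0) → N r n = 0)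
    (hrec : ∀ r n, 1 < r →
      N r n = ∑ᶠ k ∈ Set.Ici 1, ∑ᶠ s ∈ Set.Ici (k + 1), n.choose s * N (r - k) (n - s)) :
    (PowerSeries.mk fun n =>
        (∑ᶠ r : ℕ, (N (r + 1) n : RatFunc ℚ) * RatFunc.X ^ r) / (n.factorial : RatFunc ℚ)) *
      ((PowerSeries.C (R := RatFunc ℚ)) RatFunc.X -
        PowerSeries.rescale (RatFunc.X - 1) (PowerSeries.exp (RatFunc ℚ))) =
    (PowerSeries.C (R := RatFunc ℚ)) (RatFunc.X - 1) := by
  classical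
  set x : RatFunc ℚ := RatFunc.X with hxdef
  -- vanishing facts
  have hzero : ∀ r n : ℕ, n ≤ r → (r ≠ 0 ∨ n ≠ 0) → N (r + 1) n = 0 := by
    intro r n h1 h2
    apply hN0 <;> rintro ⟨a, b⟩ <;> omega
  have hzero0 : ∀ n : ℕ, N 0 n = 0 := by
    intro n; apply hN0 <;> rintro ⟨a, b⟩ <;> omega
  set A : ℕ → RatFunc ℚ := fun n => ∑ r ∈ range (n + 1), (N (r + 1) n : RatFunc ℚ) * x ^ r
    with hAdef
  have hA0 : A 0 = 1 := by simp [hAdef, hN1]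
  have hAfin : ∀ n, (∑ᶠ r : ℕ, (N (r + 1) n : RatFunc ℚ) * x ^ r) = A n := by
    intro n
    rw [hAdef]
    apply finsum_eq_sum_of_support_subset
    intro r hr
    simp only [Function.mem_support] at hr
    simp only [Finset.coe_range, Set.mem_Iio]
    by_contra hc
    push_neg at hc
    rw [hzero r n (by omega) (by omega)] at hr
    simp at hr
  -- recursion in Finset form
  have hrecF : ∀ r n : ℕ, 1 ≤ r → (N (r + 1) n) =
      ∑ k ∈ Icc 1 n, ∑ s ∈ Icc (k + 1) n, n.choose s * N (r + 1 - k) (n - s) := by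
    intro r n hr
    rw [hrec (r + 1) n (by omega)]
    have hinner : ∀ k : ℕ, (∑ᶠ s ∈ Set.Ici (k + 1), n.choose s * N (r + 1 - k) (n - s)) =
        ∑ s ∈ Icc (k + 1) n, n.choose s * N (r + 1 - k) (n - s) := by
      intro k
      apply finsum_mem_eq_sum_of_inter_support_eq
      ext s
      simp only [Set.mem_inter_iff, Set.mem_Ici, Function.mem_support, Finset.coe_Icc,
        Set.mem_Icc]
      constructor
      · rintro ⟨h1, h2⟩
        refine ⟨⟨h1, ?_⟩, h2⟩
        by_contra hs
        push_neg at hs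
        rw [Nat.choose_eq_zero_of_lt hs] at h2
        simp at h2
      · rintro ⟨⟨h1, _⟩, h2⟩; exact ⟨h1, h2⟩
    simp only [hinner]
    apply finsum_mem_eq_sum_of_inter_support_eq
    ext k
    simp only [Set.mem_inter_iff, Set.mem_Ici, Function.mem_support, Finset.coe_Icc,
      Set.mem_Icc]
    constructor
    · rintro ⟨h1, h2⟩
      refine ⟨⟨h1, ?_⟩, h2⟩
      by_contra hk
      push_neg at hk
      rw [Finset.Icc_eq_empty (by omega)] at h2
      simp at h2
    · rintro ⟨⟨h1, _⟩, h2⟩; exact ⟨h1, h2⟩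
  -- the shifted sum identity
  have hshift : ∀ n k s : ℕ, 1 ≤ k → k + 1 ≤ s → s ≤ n →
      (∑ r ∈ Icc 1 n, (N (r + 1 - k) (n - s) : RatFunc ℚ) * x ^ r) = x ^ k * A (n - s) := by
    intro n k s hk hks hsn
    have hsub : Icc k (k + (n - s)) ⊆ Icc 1 n := by
      intro r hr
      simp only [Finset.mem_Icc] at hr ⊢
      omega
    rw [← Finset.sum_subset hsub (by
      intro r hr hr2
      simp only [Finset.mem_Icc] at hr hr2
      rcases lt_or_ge r k with h | h
      · have : r + 1 - k = 0 := by omega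
        rw [this, hzero0]; simp
      · have : r + 1 - k = (r - k) + 1 := by omega
        rw [this, hzero (r - k) (n - s) (by omega) (by omega)]; simp)]
    have : Icc k (k + (n - s)) = Ico k (k + (n - s) + 1) := by
      rw [Finset.Ico_add_one_right_eq_Icc]
    rw [this, Finset.sum_Ico_eq_sum_range]
    have h2 : k + (n - s) + 1 - k = (n - s) + 1 := by omega
    rw [h2, hAdef, Finset.mul_sum]
    apply Finset.sum_congr rfl
    intro j hj
    have : k + j + 1 - k = j + 1 := by omega
    rw [this]
    ring
  -- key identity (E)
  have hE : ∀ n : ℕ, A n = 1 + ∑ k ∈ Icc 1 n, ∑ s ∈ Icc (k + 1) n,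
      (n.choose s : RatFunc ℚ) * x ^ k * A (n - s) := by
    intro n
    have hsplit : range (n + 1) = insert 0 (Icc 1 n) := by
      ext r; simp [Finset.mem_range, Finset.mem_Icc]; omega
    rw [hAdef]
    simp only [hsplit]
    rw [Finset.sum_insert (by simp)]
    simp only [hN1, pow_zero, Nat.cast_one, one_mul]
    congr 1
    calc ∑ r ∈ Icc 1 n, (N (r + 1) n : RatFunc ℚ) * x ^ r
        = ∑ r ∈ Icc 1 n, (∑ k ∈ Icc 1 n, ∑ s ∈ Icc (k + 1) n,
            (n.choose s : RatFunc ℚ) * N (r + 1 - k) (n - s)) * x ^ r := by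
          apply Finset.sum_congr rfl
          intro r hr
          simp only [Finset.mem_Icc] at hr
          rw [hrecF r n hr.1]
          push_cast
          ring
      _ = ∑ k ∈ Icc 1 n, ∑ s ∈ Icc (k + 1) n, (n.choose s : RatFunc ℚ) *
            (∑ r ∈ Icc 1 n, (N (r + 1 - k) (n - s) : RatFunc ℚ) * x ^ r) := by
          simp only [Finset.sum_mul]
          rw [Finset.sum_comm]
          apply Finset.sum_congr rfl
          intro k _
          rw [Finset.sum_comm]
          apply Finset.sum_congr rfl
          intro s _
          rw [Finset.mul_sum]
          apply Finset.sum_congr rfl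
          intro r _
          ring
      _ = ∑ k ∈ Icc 1 n, ∑ s ∈ Icc (k + 1) n, (n.choose s : RatFunc ℚ) * x ^ k * A (n - s) := by
          apply Finset.sum_congr rfl
          intro k hk
          apply Finset.sum_congr rfl
          intro s hs
          simp only [Finset.mem_Icc] at hk hs
          rw [hshift n k s hk.1 hs.1 hs.2]
          ring
  -- geometric sum
  have hgeo : ∀ s : ℕ, 1 ≤ s → (∑ k ∈ Icc 1 (s - 1), x ^ k) * (x - 1) = x ^ s - x := by
    intro s hs
    have h1 : range s = insert 0 (Icc 1 (s - 1)) := by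
      ext r; simp [Finset.mem_range, Finset.mem_Icc]; omega
    have h2 := geom_sum_mul x s
    rw [h1, Finset.sum_insert (by simp)] at h2
    rw [add_mul, pow_zero, one_mul] at h2
    linear_combination h2
  -- identity (G)
  have hG : ∀ n : ℕ, (x - 1) * (A n - 1) =
      ∑ s ∈ Icc 2 n, (n.choose s : RatFunc ℚ) * (x ^ s - x) * A (n - s) := by
    intro n
    rw [hE n]
    have hswap : ∑ k ∈ Icc 1 n, ∑ s ∈ Icc (k + 1) n,
        (n.choose s : RatFunc ℚ) * x ^ k * A (n - s)
        = ∑ s ∈ Icc 2 n, ∑ k ∈ Icc 1 (s - 1),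
        (n.choose s : RatFunc ℚ) * x ^ k * A (n - s) := by
      apply Finset.sum_comm'
      intro k s
      simp only [Finset.mem_Icc]
      omega
    rw [hswap, add_sub_cancel_left, Finset.mul_sum]
    apply Finset.sum_congr rfl
    intro s hs
    simp only [Finset.mem_Icc] at hs
    have hg := hgeo s (by omega)
    calc (x - 1) * ∑ k ∈ Icc 1 (s - 1), (n.choose s : RatFunc ℚ) * x ^ k * A (n - s)
        = (n.choose s : RatFunc ℚ) * A (n - s) * ((∑ k ∈ Icc 1 (s - 1), x ^ k) * (x - 1)) := by
          simp only [Finset.mul_sum, Finset.sum_mul]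
          apply Finset.sum_congr rfl
          intro k _
          ring
      _ = _ := by rw [hg]; ring
  -- identity (I)
  have hI : ∀ n : ℕ, ∑ s ∈ range (n + 1), (n.choose s : RatFunc ℚ) * (x - x ^ s) * A (n - s)
      = x - 1 := by
    intro n
    rcases Nat.eq_zero_or_pos n with h0 | hn
    · subst h0
      simp [hA0]
    have hsplit : range (n + 1) = insert 0 (insert 1 (Icc 2 n)) := by
      ext r; simp [Finset.mem_range, Finset.mem_Icc]; omega
    rw [hsplit, Finset.sum_insert (by simp),
      Finset.sum_insert (by simp)]
    have hrest : ∑ s ∈ Icc 2 n, (n.choose s : RatFunc ℚ) * (x - x ^ s) * A (n - s)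
        = -((x - 1) * (A n - 1)) := by
      rw [hG n, ← Finset.sum_neg_distrib]
      apply Finset.sum_congr rfl
      intro s _
      ring
    rw [hrest]
    simp only [Nat.choose_zero_right, Nat.cast_one, pow_zero, pow_one, Nat.sub_zero]
    ring
  -- now the power series computation
  simp only [hAfin]
  have hexp_ne : (PowerSeries.exp (RatFunc ℚ)) ≠ 0 := by
    intro h
    have h2 := PowerSeries.constantCoeff_exp (A := RatFunc ℚ)
    rw [h] at h2
    simp at h2
  have hresc : PowerSeries.rescale (x - 1) (PowerSeries.exp (RatFunc ℚ)) *
      PowerSeries.exp (RatFunc ℚ) = PowerSeries.rescale x (PowerSeries.exp (RatFunc ℚ)) := by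
    have h := PowerSeries.exp_mul_exp_eq_exp_add (x - 1) (1 : RatFunc ℚ)
    rw [sub_add_cancel] at h
    rw [← h, PowerSeries.rescale_one]
    rfl
  have final : (PowerSeries.mk fun n => A n / (n.factorial : RatFunc ℚ)) *
      ((PowerSeries.C (R := RatFunc ℚ)) x * PowerSeries.exp (RatFunc ℚ) -
        PowerSeries.rescale x (PowerSeries.exp (RatFunc ℚ))) =
      (PowerSeries.C (R := RatFunc ℚ)) (x - 1) * PowerSeries.exp (RatFunc ℚ) := by
        ext n
        rw [PowerSeries.coeff_mul, PowerSeries.coeff_C_mul, PowerSeries.coeff_exp,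
          Finset.Nat.sum_antidiagonal_eq_sum_range_succ_mk]
        simp only [PowerSeries.coeff_mk, map_sub, PowerSeries.coeff_C_mul,
          PowerSeries.coeff_rescale, PowerSeries.coeff_exp,
          map_div₀, map_one, map_natCast]
        have hI' : ∑ k ∈ range (n + 1), (n.choose k : RatFunc ℚ) * (x - x ^ (n - k)) * A k
            = x - 1 := by
          rw [← hI n, ← Finset.sum_range_reflect
            (fun s => (n.choose s : RatFunc ℚ) * (x - x ^ s) * A (n - s)) (n + 1)]
          apply Finset.sum_congr rfl
          intro k hk
          simp only [Finset.mem_range] at hk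
          have h1 : n + 1 - 1 - k = n - k := by omega
          have h2 : n - (n - k) = k := by omega
          rw [h1, h2, Nat.choose_symm (by omega)]
        rw [← hI', Finset.sum_mul]
        apply Finset.sum_congr rfl
        intro k hk
        simp only [Finset.mem_range] at hk
        haveI hchar : CharZero (RatFunc ℚ) :=
          charZero_of_injective_algebraMap (algebraMap ℚ (RatFunc ℚ)).injective
        rw [Nat.cast_choose (RatFunc ℚ) (show k ≤ n by omega)]
        have hf1 : (k.factorial : RatFunc ℚ) ≠ 0 :=
          Nat.cast_ne_zero.2 (Nat.factorial_ne_zero _)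
        have hf2 : ((n - k).factorial : RatFunc ℚ) ≠ 0 :=
          Nat.cast_ne_zero.2 (Nat.factorial_ne_zero _)
        have hf3 : (n.factorial : RatFunc ℚ) ≠ 0 :=
          Nat.cast_ne_zero.2 (Nat.factorial_ne_zero _)
        field_simp
  have cancel : ∀ a b : PowerSeries (RatFunc ℚ),
      a * PowerSeries.exp (RatFunc ℚ) = b * PowerSeries.exp (RatFunc ℚ) → a = b :=
    fun a b h => mul_right_cancel₀ hexp_ne h
  apply cancel
  calc (PowerSeries.mk fun n => A n / (n.factorial : RatFunc ℚ)) *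
        ((PowerSeries.C (R := RatFunc ℚ)) x -
          PowerSeries.rescale (x - 1) (PowerSeries.exp (RatFunc ℚ))) *
        PowerSeries.exp (RatFunc ℚ)
      = (PowerSeries.mk fun n => A n / (n.factorial : RatFunc ℚ)) *
        ((PowerSeries.C (R := RatFunc ℚ)) x * PowerSeries.exp (RatFunc ℚ) -
          PowerSeries.rescale (x - 1) (PowerSeries.exp (RatFunc ℚ)) *
            PowerSeries.exp (RatFunc ℚ)) := by ring
    _ = (PowerSeries.C (R := RatFunc ℚ)) (x - 1) * PowerSeries.exp (RatFunc ℚ) := by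
        rw [hresc]; exact final
end
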